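/- arXiv:math/0102018 — 7 statements merged into one kernel-verified Lean document; each statement's English description precedes it below -/
import Mathlib

section
/- Let A : D(A) ⊆ H → H be a densely defined self-adjoint injective operator on a complex Hilbert space H, and let (ε_n) be any sequence of nonzero real numbers converging to 0. Then for every φ ∈ H one has −A·R(iε_n)φ → φ in H as n → ∞, where R(iε_n) := (−A + iε_n)^{−1} (which exists and is bounded since A is self-adjoint and ε_n ≠ 0). -/
open Complex Filter Topology
open scoped InnerProductSpace ComplexConjugate

noncomputable section

namespace SingPert

/-- `R` is the (everywhere defined, bounded) resolvent `(-A + z)⁻¹` of `A` at `z`. -/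
structure IsResolvent {H : Type*} [NormedAddCommGroup H] [InnerProductSpace ℂ H]
    (A : H →ₗ.[ℂ] H) (z : ℂ) (R : H →L[ℂ] H) : Prop where
  mem : ∀ ψ : H, R ψ ∈ A.domain
  left : ∀ ψ : H, -A ⟨R ψ, mem ψ⟩ + z • R ψ = ψ
  right : ∀ φ : A.domain, R (-A φ + z • (φ : H)) = (φ : H)

/-- If `A` is a densely defined self-adjoint injective operator and
`(ε n)` is a sequence of nonzero reals converging to `0`, then for every `φ ∈ H`
one has `-A (R(i ε n) φ) → φ` in `H`, where `R(i ε n) = (-A + i ε n)⁻¹`. -/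
theorem neg_A_resolvent_tendsto_id
    {H : Type*} [NormedAddCommGroup H] [InnerProductSpace ℂ H] [CompleteSpace H]
    (A : H →ₗ.[ℂ] H) (hA : IsSelfAdjoint A)
    (hinj : ∀ φ : A.domain, A φ = 0 → (φ : H) = 0)
    (ε : ℕ → ℝ) (hε0 : ∀ n, ε n ≠ 0) (hεlim : Filter.Tendsto ε Filter.atTop (nhds 0))
    (R : ℕ → H →L[ℂ] H) (hR : ∀ n, IsResolvent A (Complex.I * (ε n : ℂ)) (R n))
    (φ : H) :
    Filter.Tendsto (fun n => -A ⟨R n φ, (hR n).mem φ⟩) Filter.atTop (nhds φ) := by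
  have hd : Dense (A.domain : Set H) := hA.dense_domain
  have hAeq : A.adjoint = A := hA
  have hdom : A.adjoint.domain = A.domain := congrArg LinearPMap.domain hAeq
  obtain ⟨_, hfeq⟩ := LinearPMap.ext_iff.mp hAeq
  -- symmetry
  have hsymm : ∀ x y : A.domain, ⟪A x, (y : H)⟫_ℂ = ⟪(x : H), A y⟫_ℂ := by
    intro x y
    have hx : (x : H) ∈ A.adjoint.domain := by rw [hdom]; exact x.2
    have h1 := LinearPMap.adjoint_isFormalAdjoint hd ⟨(x : H), hx⟩ y
    rwa [@hfeq (x : H) hx x.2] at h1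
  -- the inner product ⟪A x, x⟫ is real
  have hreal : ∀ x : A.domain, (⟪A x, (x : H)⟫_ℂ).im = 0 := by
    intro x
    have h1 := hsymm x x
    have h2 : ⟪(x : H), A x⟫_ℂ = conj ⟪A x, (x : H)⟫_ℂ := (inner_conj_symm _ _).symm
    rw [h2] at h1
    have := congrArg Complex.im h1
    simp only [Complex.conj_im] at this
    linarith
  -- norm bound : |ε| * ‖R ψ‖ ≤ ‖ψ‖
  have hbound : ∀ n (ψ : H), |ε n| * ‖R n ψ‖ ≤ ‖ψ‖ := by
    intro n ψ
    set x : A.domain := ⟨R n ψ, (hR n).mem ψ⟩ with hxdef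
    have hx := (hR n).left ψ
    have hnorm := norm_add_sq (𝕜 := ℂ) (E := H) (-A x) ((Complex.I * (ε n : ℂ)) • R n ψ)
    rw [show -A x = -A ⟨R n ψ, (hR n).mem ψ⟩ from rfl, hx] at hnorm
    have hre : RCLike.re ⟪-A x, (Complex.I * (ε n : ℂ)) • R n ψ⟫_ℂ = (0 : ℝ) := by
      rw [RCLike.re_to_complex]
      rw [inner_smul_right, inner_neg_left]
      have hRx : R n ψ = (x : H) := rfl
      rw [hRx]
      have := hreal x
      simp [Complex.mul_re, Complex.mul_im, this]
    have hsmul : ‖(Complex.I * (ε n : ℂ)) • R n ψ‖ = |ε n| * ‖R n ψ‖ := by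
      rw [norm_smul, norm_mul, Complex.norm_I, one_mul, Complex.norm_real, Real.norm_eq_abs]
    have h2 : (|ε n| * ‖R n ψ‖) ^ 2 ≤ ‖ψ‖ ^ 2 := by
      rw [hnorm, hre, ← hsmul]
      nlinarith [sq_nonneg ‖-A x‖]
    nlinarith [abs_nonneg (ε n), norm_nonneg (R n ψ), norm_nonneg ψ,
      mul_nonneg (abs_nonneg (ε n)) (norm_nonneg (R n ψ))]
  -- density of the range of A
  have hdense : Dense ((LinearMap.range A.toFun : Submodule ℂ H) : Set H) := by
    rw [Submodule.dense_iff_topologicalClosure_eq_top,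
      ← Submodule.orthogonal_orthogonal_eq_closure]
    have horth : (LinearMap.range A.toFun)ᗮ = ⊥ := by
      rw [Submodule.eq_bot_iff]
      intro ψ hψ
      have hkey : ∀ x : A.domain, ⟪ψ, A x⟫_ℂ = 0 := by
        intro x
        have h0 : ⟪A x, ψ⟫_ℂ = 0 := hψ (A x) ⟨x, rfl⟩
        rw [← inner_conj_symm, h0, map_zero]
      have hmem : ψ ∈ A.adjoint.domain :=
        LinearPMap.mem_adjoint_domain_of_exists ψ ⟨0, fun x => by
          rw [inner_zero_left, hkey x]⟩
      have hzero : A.adjoint ⟨ψ, hmem⟩ = 0 :=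
        LinearPMap.adjoint_apply_eq hd ⟨ψ, hmem⟩ fun x => by
          rw [inner_zero_left, hkey x]
      have hmem' : ψ ∈ A.domain := hdom ▸ hmem
      have hAψ : A ⟨ψ, hmem'⟩ = 0 := by
        rw [← @hfeq ψ hmem hmem']
        exact hzero
      exact hinj ⟨ψ, hmem'⟩ hAψ
    rw [horth, Submodule.bot_orthogonal_eq_top]
  -- reduce to showing (I ε n) • R n φ → 0
  have hleft : ∀ n, -A ⟨R n φ, (hR n).mem φ⟩ = φ - (Complex.I * (ε n : ℂ)) • R n φ := by
    intro n
    have := (hR n).left φ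
    linear_combination (norm := abel) this
  simp only [hleft]
  have hmain : Filter.Tendsto (fun n => (Complex.I * (ε n : ℂ)) • R n φ) Filter.atTop (nhds 0) := by
    rw [NormedAddCommGroup.tendsto_nhds_zero]
    intro δ hδ
    obtain ⟨ψ, hψball, hψmem⟩ := Metric.dense_iff.mp hdense φ (δ / 2) (by linarith)
    obtain ⟨χ, hχ⟩ := hψmem
    -- resolvent identity applied to -χ : R n (A χ) = -χ + (I εn) • R n χ
    have hid : ∀ n, R n ψ = -(χ : H) + (Complex.I * (ε n : ℂ)) • R n (χ : H) := by
      intro n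
      have h1 := (hR n).right (-χ)
      rw [LinearPMap.map_neg] at h1
      have hcoe : ((-χ : A.domain) : H) = -(χ : H) := rfl
      rw [hcoe, neg_neg] at h1
      have hAχ : A χ = ψ := hχ
      rw [hAχ] at h1
      have h2 : R n ψ + (Complex.I * (ε n : ℂ)) • R n (-(χ : H)) = -(χ : H) := by
        rw [← map_smul, ← map_add]; exact h1
      rw [map_neg, smul_neg] at h2
      linear_combination (norm := abel) h2
    -- eventually 2 |ε n| ‖χ‖ < δ/2, and always the first piece < δ/2
    have htend : Filter.Tendsto (fun n => 2 * |ε n| * ‖(χ : H)‖) Filter.atTop (nhds 0) := by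
      have : Filter.Tendsto (fun n => |ε n|) Filter.atTop (nhds 0) := by
        simpa using hεlim.abs
      simpa using ((this.const_mul 2).mul_const ‖(χ : H)‖)
    have hev : ∀ᶠ n in Filter.atTop, 2 * |ε n| * ‖(χ : H)‖ < δ / 2 :=
      (htend.eventually (eventually_lt_nhds (by linarith : (0:ℝ) < δ / 2)))
    filter_upwards [hev] with n hn
    have hsplit : (Complex.I * (ε n : ℂ)) • R n φ
        = (Complex.I * (ε n : ℂ)) • R n (φ - ψ) + (Complex.I * (ε n : ℂ)) • R n ψ := by
      rw [← smul_add, ← map_add, sub_add_cancel]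
    have hnI : ‖Complex.I * (ε n : ℂ)‖ = |ε n| := by
      rw [norm_mul, Complex.norm_I, one_mul, Complex.norm_real, Real.norm_eq_abs]
    have h1 : ‖(Complex.I * (ε n : ℂ)) • R n (φ - ψ)‖ ≤ ‖φ - ψ‖ := by
      rw [norm_smul, hnI]; exact hbound n (φ - ψ)
    have h2 : ‖(Complex.I * (ε n : ℂ)) • R n ψ‖ ≤ 2 * |ε n| * ‖(χ : H)‖ := by
      rw [hid n, smul_add, smul_neg]
      calc ‖-((Complex.I * (ε n : ℂ)) • (χ : H))
            + (Complex.I * (ε n : ℂ)) • (Complex.I * (ε n : ℂ)) • R n (χ : H)‖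
          ≤ ‖(Complex.I * (ε n : ℂ)) • (χ : H)‖
            + ‖(Complex.I * (ε n : ℂ)) • (Complex.I * (ε n : ℂ)) • R n (χ : H)‖ := by
            simpa [norm_neg] using norm_add_le (-((Complex.I * (ε n : ℂ)) • (χ : H)))
              ((Complex.I * (ε n : ℂ)) • (Complex.I * (ε n : ℂ)) • R n (χ : H))
        _ ≤ |ε n| * ‖(χ : H)‖ + |ε n| * (|ε n| * ‖R n (χ : H)‖) := by
            rw [norm_smul, hnI, norm_smul, hnI, norm_smul, hnI]
        _ ≤ |ε n| * ‖(χ : H)‖ + |ε n| * ‖(χ : H)‖ := by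
            have := hbound n (χ : H)
            have := abs_nonneg (ε n)
            nlinarith
        _ = 2 * |ε n| * ‖(χ : H)‖ := by ring
    have hdist : ‖φ - ψ‖ < δ / 2 := by
      rw [← dist_eq_norm, dist_comm]; exact Metric.mem_ball.mp hψball
    calc ‖(Complex.I * (ε n : ℂ)) • R n φ‖
        ≤ ‖(Complex.I * (ε n : ℂ)) • R n (φ - ψ)‖ + ‖(Complex.I * (ε n : ℂ)) • R n ψ‖ := by
          rw [hsplit]; exact norm_add_le _ _
      _ < δ / 2 + δ / 2 := by linarith
      _ = δ := by ring
  simpa using (tendsto_const_nhds.sub hmain : Filter.Tendsto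
    (fun n => φ - (Complex.I * (ε n : ℂ)) • R n φ) Filter.atTop (nhds (φ - 0)))

end SingPert
end
end

section
/- Let A : D(A) ⊆ H → H be a densely defined self-adjoint injective operator, and let (ε_n) be a sequence of nonzero real numbers converging to 0. Then for every φ ∈ H the sequence (R(iε_n)φ) in D(A) is Cauchy with respect to the norm ‖ψ‖_(A) := ‖Aψ‖_H; its limit Rφ in the completion D̂(A) does not depend on the choice of the sequence (ε_n); and the resulting linear map R : H → D̂(A) is bounded. -/
open Complex Filter Topology
open scoped InnerProductSpace ComplexConjugate

noncomputable section

namespace SingPert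

section Aux

variable {H : Type*} [NormedAddCommGroup H] [InnerProductSpace ℂ H] [CompleteSpace H]
  {A : H →ₗ.[ℂ] H}

lemma aux_isFormalAdjoint (hA : IsSelfAdjoint A) : A.IsFormalAdjoint A := by
  have h := LinearPMap.adjoint_isFormalAdjoint hA.dense_domain
  rwa [LinearPMap.isSelfAdjoint_def.mp hA] at h

lemma aux_pythagoras (hsym : A.IsFormalAdjoint A) {ε : ℝ} {R : H →L[ℂ] H}
    (hR : IsResolvent A (I * (ε:ℂ)) R) (φ : H) :
    ‖A ⟨R φ, hR.mem φ⟩‖ ^ 2 + ε ^ 2 * ‖R φ‖ ^ 2 = ‖φ‖ ^ 2 := by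
  set ψ : A.domain := ⟨R φ, hR.mem φ⟩ with hψ
  have hleft := hR.left φ
  have him : (⟪(A ψ : H), (ψ : H)⟫_ℂ).im = 0 := by
    have h1 : ⟪(A ψ : H), (ψ : H)⟫_ℂ = conj ⟪(A ψ : H), (ψ : H)⟫_ℂ :=
      (hsym ψ ψ).trans (inner_conj_symm _ _).symm
    exact Complex.conj_eq_iff_im.mp h1.symm
  have hcross : re ⟪(-(A ψ) : H), (I * (ε:ℂ)) • R φ⟫_ℂ = 0 := by
    rw [inner_smul_right, inner_neg_left]
    have : ⟪(A ψ : H), R φ⟫_ℂ = ⟪(A ψ : H), (ψ : H)⟫_ℂ := rfl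
    rw [this]
    simp [Complex.mul_re, Complex.mul_im, him]
  have hnorm := @norm_add_sq ℂ _ _ _ _ (-(A ψ) : H) ((I * (ε:ℂ)) • R φ)
  rw [hleft] at hnorm
  rw [show RCLike.re ⟪(-(A ψ) : H), (I * (ε:ℂ)) • R φ⟫_ℂ = 0 from hcross] at hnorm
  have h2 : ‖(I * (ε:ℂ)) • R φ‖ ^ 2 = ε ^ 2 * ‖R φ‖ ^ 2 := by
    rw [norm_smul, norm_mul, Complex.norm_I, one_mul, Complex.norm_real, mul_pow,
      Real.norm_eq_abs, _root_.sq_abs]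
  rw [h2, norm_neg] at hnorm
  rw [hnorm]; ring

lemma aux_normA_le (hsym : A.IsFormalAdjoint A) {ε : ℝ} {R : H →L[ℂ] H}
    (hR : IsResolvent A (I * (ε:ℂ)) R) (φ : H) :
    ‖A ⟨R φ, hR.mem φ⟩‖ ≤ ‖φ‖ := by
  have h := aux_pythagoras hsym hR φ
  nlinarith [norm_nonneg (A ⟨R φ, hR.mem φ⟩ : H), norm_nonneg φ, sq_nonneg ε,
    sq_nonneg (‖R φ‖), mul_nonneg (sq_nonneg ε) (sq_nonneg ‖R φ‖)]

lemma aux_eps_norm_le (hsym : A.IsFormalAdjoint A) {ε : ℝ} {R : H →L[ℂ] H}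
    (hR : IsResolvent A (I * (ε:ℂ)) R) (φ : H) :
    |ε| * ‖R φ‖ ≤ ‖φ‖ := by
  have h := aux_pythagoras hsym hR φ
  nlinarith [norm_nonneg (A ⟨R φ, hR.mem φ⟩ : H), norm_nonneg φ, norm_nonneg (R φ),
    abs_nonneg ε, _root_.sq_abs ε]

lemma aux_R_A (hsym : A.IsFormalAdjoint A) {ε : ℝ} {R : H →L[ℂ] H}
    (hR : IsResolvent A (I * (ε:ℂ)) R) (χ : A.domain) :
    R (A χ) = -(χ : H) + (I * (ε:ℂ)) • R (χ : H) := by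
  have h : (A χ : H) = -(-A χ + (I * (ε:ℂ)) • (χ : H)) + (I * (ε:ℂ)) • (χ : H) := by
    rw [neg_add, neg_neg, add_assoc, neg_add_cancel, add_zero]
  rw [h, map_add, map_neg, hR.right χ, map_smul]

lemma aux_eps_R_A_le (hsym : A.IsFormalAdjoint A) {ε : ℝ} {R : H →L[ℂ] H}
    (hR : IsResolvent A (I * (ε:ℂ)) R) (χ : A.domain) :
    |ε| * ‖R (A χ)‖ ≤ 2 * |ε| * ‖(χ : H)‖ := by
  have h1 : ‖R (A χ)‖ ≤ ‖(χ : H)‖ + |ε| * ‖R (χ : H)‖ := by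
    rw [aux_R_A hsym hR χ]
    calc ‖-(χ : H) + (I * (ε:ℂ)) • R (χ : H)‖
        ≤ ‖-(χ : H)‖ + ‖(I * (ε:ℂ)) • R (χ : H)‖ := norm_add_le _ _
      _ = ‖(χ : H)‖ + |ε| * ‖R (χ : H)‖ := by
          rw [norm_neg, norm_smul, norm_mul, Complex.norm_I, one_mul, Complex.norm_real,
            Real.norm_eq_abs]
  have h2 : |ε| * ‖R (χ : H)‖ ≤ ‖(χ : H)‖ := aux_eps_norm_le hsym hR (χ : H)
  have h3 : |ε| * ‖R (A χ)‖ ≤ |ε| * (‖(χ : H)‖ + |ε| * ‖R (χ : H)‖) :=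
    mul_le_mul_of_nonneg_left h1 (abs_nonneg ε)
  nlinarith [abs_nonneg ε]

/-- Density of the range of `A`. -/
lemma aux_range_dense (hA : IsSelfAdjoint A)
    (hinj : ∀ φ : A.domain, A φ = 0 → (φ : H) = 0)
    (ψ : H) {η : ℝ} (hη : 0 < η) : ∃ χ : A.domain, ‖ψ - A χ‖ < η := by
  have hd := hA.dense_domain
  have heq := LinearPMap.isSelfAdjoint_def.mp hA
  have hker : ∀ x : H, (∀ φ : A.domain, ⟪x, A φ⟫_ℂ = 0) → x = 0 := by
    intro x h
    have hmem : x ∈ A.adjoint.domain :=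
      LinearPMap.mem_adjoint_domain_of_exists _ ⟨0, by intro y; simp [h y]⟩
    have happ : A.adjoint ⟨x, hmem⟩ = 0 :=
      LinearPMap.adjoint_apply_eq hd _ (by intro y; simp [h y])
    have hmem' : x ∈ A.domain := heq ▸ hmem
    have : A ⟨x, hmem'⟩ = 0 := by
      rw [← happ]
      obtain ⟨hdom, hfun⟩ := LinearPMap.ext_iff.mp heq
      exact (hfun (x := x) (hf := hmem) (hg := hmem')).symm
    exact hinj _ this
  set K := LinearMap.range A.toFun with hK
  have horth : Kᗮ = ⊥ := by
    rw [Submodule.eq_bot_iff]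
    intro x hx
    refine hker x fun φ => ?_
    have := (Submodule.mem_orthogonal K x).mp hx (A.toFun φ) ⟨φ, rfl⟩
    rw [← inner_conj_symm, show (⟪(A φ : H), x⟫_ℂ) = 0 from this, map_zero]
  have hdense : Dense (K : Set H) := by
    rw [Submodule.dense_iff_topologicalClosure_eq_top,
      Submodule.topologicalClosure_eq_top_iff]
    exact horth
  obtain ⟨y, hyK, hy⟩ := Metric.mem_closure_iff.mp (hdense ψ) η hη
  obtain ⟨χ, hχ⟩ := hyK
  subst hχ
  exact ⟨χ, by rw [← dist_eq_norm]; exact hy⟩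

/-- Key smallness lemma: `|ε| ‖R(iε)φ‖` is small for small `ε`, uniformly over resolvents. -/
lemma aux_key (hA : IsSelfAdjoint A)
    (hinj : ∀ φ : A.domain, A φ = 0 → (φ : H) = 0)
    (φ : H) {η : ℝ} (hη : 0 < η) :
    ∃ δ > 0, ∀ (ε : ℝ), ε ≠ 0 → |ε| < δ → ∀ R : H →L[ℂ] H,
      IsResolvent A (I * (ε:ℂ)) R → |ε| * ‖R φ‖ ≤ η := by
  have hsym := aux_isFormalAdjoint hA
  obtain ⟨χ, hχ⟩ := aux_range_dense hA hinj φ (half_pos hη)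
  refine ⟨η / (4 * (‖(χ : H)‖ + 1)), by positivity, fun ε hε hεδ R hR => ?_⟩
  have h1 : |ε| * ‖R φ‖ ≤ |ε| * ‖R (φ - A χ)‖ + |ε| * ‖R (A χ)‖ := by
    have : R φ = R (φ - A χ) + R (A χ) := by rw [← map_add]; congr 1; abel
    rw [this, mul_comm, mul_comm (|ε|) _, mul_comm (|ε|) _]
    calc ‖R (φ - A χ) + R (A χ)‖ * |ε| ≤ (‖R (φ - A χ)‖ + ‖R (A χ)‖) * |ε| :=
          mul_le_mul_of_nonneg_right (norm_add_le _ _) (abs_nonneg ε)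
      _ = ‖R (φ - A χ)‖ * |ε| + ‖R (A χ)‖ * |ε| := by ring
  have h2 : |ε| * ‖R (φ - A χ)‖ ≤ ‖φ - A χ‖ := aux_eps_norm_le hsym hR _
  have h3 : |ε| * ‖R (A χ)‖ ≤ 2 * |ε| * ‖(χ : H)‖ := aux_eps_R_A_le hsym hR χ
  have h4 : 2 * |ε| * ‖(χ : H)‖ ≤ η / 2 := by
    have hpos : (0:ℝ) < ‖(χ : H)‖ + 1 := by positivity
    have := mul_le_mul_of_nonneg_right (le_of_lt hεδ) (le_of_lt hpos)
    calc 2 * |ε| * ‖(χ : H)‖ ≤ 2 * |ε| * (‖(χ : H)‖ + 1) := by nlinarith [abs_nonneg ε]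
      _ ≤ 2 * (η / (4 * (‖(χ : H)‖ + 1))) * (‖(χ : H)‖ + 1) := by nlinarith [abs_nonneg ε]
      _ = η / 2 := by field_simp; ring
  linarith

lemma aux_A_eq {ε : ℝ} {R : H →L[ℂ] H}
    (hR : IsResolvent A (I * (ε:ℂ)) R) (φ : H) :
    (A ⟨R φ, hR.mem φ⟩ : H) = (I * (ε:ℂ)) • R φ - φ := by
  have h := hR.left φ
  set a := (A ⟨R φ, hR.mem φ⟩ : H) with ha
  set s := (I * (ε:ℂ)) • R φ with hs
  rw [← h]; abel

/-- Uniform Cauchy-type estimate. -/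
lemma aux_uniform (hA : IsSelfAdjoint A)
    (hinj : ∀ φ : A.domain, A φ = 0 → (φ : H) = 0)
    (φ : H) {η : ℝ} (hη : 0 < η) :
    ∃ δ > 0, ∀ (ε ε' : ℝ), ε ≠ 0 → ε' ≠ 0 → |ε| < δ → |ε'| < δ →
      ∀ (R R' : H →L[ℂ] H) (hR : IsResolvent A (I * (ε:ℂ)) R)
        (hR' : IsResolvent A (I * (ε':ℂ)) R'),
        ‖(A ⟨R φ, hR.mem φ⟩ : H) - (A ⟨R' φ, hR'.mem φ⟩ : H)‖ ≤ η := by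
  obtain ⟨δ, hδ, hk⟩ := aux_key hA hinj φ (half_pos hη)
  refine ⟨δ, hδ, fun ε ε' hε hε' hεδ hε'δ R R' hR hR' => ?_⟩
  rw [aux_A_eq hR φ, aux_A_eq hR' φ]
  have heq : ((I * (ε:ℂ)) • R φ - φ) - ((I * (ε':ℂ)) • R' φ - φ)
      = (I * (ε:ℂ)) • R φ - (I * (ε':ℂ)) • R' φ := by abel
  rw [heq]
  have h1 : ‖(I * (ε:ℂ)) • R φ‖ = |ε| * ‖R φ‖ := by
    rw [norm_smul, norm_mul, Complex.norm_I, one_mul, Complex.norm_real, Real.norm_eq_abs]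
  have h2 : ‖(I * (ε':ℂ)) • R' φ‖ = |ε'| * ‖R' φ‖ := by
    rw [norm_smul, norm_mul, Complex.norm_I, one_mul, Complex.norm_real, Real.norm_eq_abs]
  calc ‖(I * (ε:ℂ)) • R φ - (I * (ε':ℂ)) • R' φ‖
      ≤ ‖(I * (ε:ℂ)) • R φ‖ + ‖(I * (ε':ℂ)) • R' φ‖ := norm_sub_le _ _
    _ ≤ η / 2 + η / 2 := by
        rw [h1, h2]
        exact add_le_add (hk ε hε hεδ R hR) (hk ε' hε' hε'δ R' hR')
    _ = η := by ring

end Aux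

/-- Let `A` be densely defined, self-adjoint and injective, and let `D̂(A)`
(modelled by a Banach space `Dhat` together with a dense isometric embedding
`iota : D(A) → Dhat` for the norm `‖φ‖_(A) = ‖Aφ‖`) be the completion of `D(A)`.
For every sequence `(ε n)` of nonzero reals converging to `0` and every `φ ∈ H`, the
sequence `(R(i ε n) φ)` is `‖·‖_(A)`-Cauchy in `D(A)`; there is a bounded linear map
`Rhat : H → D̂(A)` such that, for every such sequence, `𝓘 (R(i ε n) φ) → Rhat φ`
(in particular the limit does not depend on the chosen sequence). -/
theorem resolvent_cauchySeq_and_limit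
    {H : Type*} [NormedAddCommGroup H] [InnerProductSpace ℂ H] [CompleteSpace H]
    (A : H →ₗ.[ℂ] H) (hA : IsSelfAdjoint A)
    (hinj : ∀ φ : A.domain, A φ = 0 → (φ : H) = 0)
    {Dhat : Type*} [NormedAddCommGroup Dhat] [NormedSpace ℂ Dhat] [CompleteSpace Dhat]
    (iota : A.domain →ₗ[ℂ] Dhat)
    (hiso : ∀ φ : A.domain, ‖iota φ‖ = ‖A φ‖)
    (hdense : DenseRange iota) :
    (∀ (ε : ℕ → ℝ), (∀ n, ε n ≠ 0) → Filter.Tendsto ε Filter.atTop (nhds 0) →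
      ∀ (R : ℕ → H →L[ℂ] H) (hR : ∀ n, IsResolvent A (Complex.I * (ε n : ℂ)) (R n)) (φ : H),
        CauchySeq (fun n => iota ⟨R n φ, (hR n).mem φ⟩)) ∧
    ∃ Rhat : H →L[ℂ] Dhat,
      ∀ (ε : ℕ → ℝ), (∀ n, ε n ≠ 0) → Filter.Tendsto ε Filter.atTop (nhds 0) →
        ∀ (R : ℕ → H →L[ℂ] H) (hR : ∀ n, IsResolvent A (Complex.I * (ε n : ℂ)) (R n)) (φ : H),
          Filter.Tendsto (fun n => iota ⟨R n φ, (hR n).mem φ⟩) Filter.atTop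
            (nhds (Rhat φ)) := by
  have hsym := aux_isFormalAdjoint hA
  -- distance formula
  have hdist : ∀ a b : A.domain, dist (iota a) (iota b) = ‖(A a : H) - (A b : H)‖ := by
    intro a b
    rw [dist_eq_norm, ← map_sub, hiso, LinearPMap.map_sub]
  -- the Cauchy statement
  have hCauchy : ∀ (ε : ℕ → ℝ), (∀ n, ε n ≠ 0) → Filter.Tendsto ε Filter.atTop (nhds 0) →
      ∀ (R : ℕ → H →L[ℂ] H) (hR : ∀ n, IsResolvent A (Complex.I * (ε n : ℂ)) (R n)) (φ : H),
        CauchySeq (fun n => iota ⟨R n φ, (hR n).mem φ⟩) := by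
    intro ε hε hlim R hR φ
    rw [Metric.cauchySeq_iff]
    intro η hη
    obtain ⟨δ, hδ, hu⟩ := aux_uniform hA hinj φ (half_pos hη)
    obtain ⟨N, hN⟩ := (Metric.tendsto_atTop.mp hlim) δ hδ
    refine ⟨N, fun m hm n hn => ?_⟩
    have hm' : |ε m| < δ := by have := hN m hm; rwa [Real.dist_eq, sub_zero] at this
    have hn' : |ε n| < δ := by have := hN n hn; rwa [Real.dist_eq, sub_zero] at this
    rw [hdist]
    calc ‖(A ⟨R m φ, (hR m).mem φ⟩ : H) - (A ⟨R n φ, (hR n).mem φ⟩ : H)‖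
        ≤ η / 2 := hu (ε m) (ε n) (hε m) (hε n) hm' hn' (R m) (R n) (hR m) (hR n)
      _ < η := by linarith
  refine ⟨hCauchy, ?_⟩
  by_cases hex : ∃ ε : ℕ → ℝ, (∀ n, ε n ≠ 0) ∧ Filter.Tendsto ε Filter.atTop (nhds 0) ∧
      ∃ R : ℕ → H →L[ℂ] H, ∀ n, IsResolvent A (Complex.I * (ε n : ℂ)) (R n)
  · obtain ⟨ε₀, hε₀, hlim₀, R₀, hR₀⟩ := hex
    have hconv : ∀ φ : H, ∃ L : Dhat,
        Filter.Tendsto (fun n => iota ⟨R₀ n φ, (hR₀ n).mem φ⟩) Filter.atTop (nhds L) :=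
      fun φ => cauchySeq_tendsto_of_complete (hCauchy ε₀ hε₀ hlim₀ R₀ hR₀ φ)
    choose L hL using hconv
    have hLadd : ∀ φ φ' : H, L (φ + φ') = L φ + L φ' := by
      intro φ φ'
      have h1 : Filter.Tendsto (fun n => iota ⟨R₀ n (φ + φ'), (hR₀ n).mem _⟩)
          Filter.atTop (nhds (L φ + L φ')) := by
        have h2 := (hL φ).add (hL φ')
        convert h2 using 2 with n
        rw [← map_add]
        congr 1
        exact Subtype.ext (map_add (R₀ n) φ φ')
      exact tendsto_nhds_unique (hL (φ + φ')) h1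
    have hLsmul : ∀ (c : ℂ) (φ : H), L (c • φ) = c • L φ := by
      intro c φ
      have h1 : Filter.Tendsto (fun n => iota ⟨R₀ n (c • φ), (hR₀ n).mem _⟩)
          Filter.atTop (nhds (c • L φ)) := by
        have h2 := (hL φ).const_smul c
        convert h2 using 2 with n
        rw [← map_smul]
        congr 1
        exact Subtype.ext (map_smul (R₀ n) c φ)
      exact tendsto_nhds_unique (hL (c • φ)) h1
    have hLbound : ∀ φ : H, ‖L φ‖ ≤ 1 * ‖φ‖ := by
      intro φ
      rw [one_mul]
      refine le_of_tendsto (hL φ).norm (Filter.Eventually.of_forall fun n => ?_)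
      rw [hiso]
      exact aux_normA_le hsym (hR₀ n) φ
    set Rhat : H →L[ℂ] Dhat := LinearMap.mkContinuous
      { toFun := L, map_add' := hLadd, map_smul' := hLsmul } 1 hLbound with hRhat
    refine ⟨Rhat, ?_⟩
    intro ε hε hlim R hR φ
    have hRhatφ : Rhat φ = L φ := rfl
    rw [hRhatφ, Metric.tendsto_atTop]
    intro η hη
    obtain ⟨δ, hδ, hu⟩ := aux_uniform hA hinj φ (half_pos hη)
    obtain ⟨N, hN⟩ := (Metric.tendsto_atTop.mp hlim) δ hδ
    obtain ⟨M, hM⟩ := (Metric.tendsto_atTop.mp hlim₀) δ hδ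
    refine ⟨N, fun n hn => ?_⟩
    have hn' : |ε n| < δ := by have := hN n hn; rwa [Real.dist_eq, sub_zero] at this
    have hle : dist (iota ⟨R n φ, (hR n).mem φ⟩) (L φ) ≤ η / 2 := by
      have htd : Filter.Tendsto
          (fun m => dist (iota ⟨R n φ, (hR n).mem φ⟩) (iota ⟨R₀ m φ, (hR₀ m).mem φ⟩))
          Filter.atTop (nhds (dist (iota ⟨R n φ, (hR n).mem φ⟩) (L φ))) :=
        tendsto_const_nhds.dist (hL φ)
      refine le_of_tendsto htd ?_
      filter_upwards [Filter.eventually_atTop.mpr ⟨M, fun m hm => hM m hm⟩] with m hm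
      have hm' : |ε₀ m| < δ := by rwa [Real.dist_eq, sub_zero] at hm
      rw [hdist]
      exact hu (ε n) (ε₀ m) (hε n) (hε₀ m) hn' hm' (R n) (R₀ m) (hR n) (hR₀ m)
    linarith
  · refine ⟨0, ?_⟩
    intro ε hε hlim R hR φ
    exact absurd ⟨ε, hε, hlim, R, hR⟩ hex

end SingPert
end
end

section
/- For every z ∈ ρ(A) and every ℓ ∈ X', the vectors (G(iε_n) − G(z))ℓ belong to D(A), form a Cauchy sequence with respect to the norm ‖ψ‖_(A) := ‖Aψ‖_H, and their limit in the completion D̂(A) equals K(z)ℓ := z R(G(z)ℓ). -/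
open Complex Filter Topology
open scoped InnerProductSpace ComplexConjugate

noncomputable section

namespace SingPert

/-- Adjoint relation between resolvents at conjugate points, for a symmetric `A`. -/
theorem resolvent_adjoint
    {H : Type*} [NormedAddCommGroup H] [InnerProductSpace ℂ H]
    {A : H →ₗ.[ℂ] H}
    (hsym : ∀ x y : A.domain, ⟪A x, (y : H)⟫_ℂ = ⟪(x : H), A y⟫_ℂ)
    {w : ℂ} {R1 R2 : H →L[ℂ] H}
    (h1 : IsResolvent A w R1) (h2 : IsResolvent A (starRingEnd ℂ w) R2)
    (φ ψ : H) : ⟪R1 φ, ψ⟫_ℂ = ⟪φ, R2 ψ⟫_ℂ := by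
  set u : A.domain := ⟨R2 ψ, h2.mem ψ⟩ with hu_def
  have hu : -A u + (starRingEnd ℂ w) • (u : H) = ψ := h2.left ψ
  set v : A.domain := ⟨R1 φ, h1.mem φ⟩ with hv_def
  have hv : -A v + w • (v : H) = φ := h1.left φ
  calc ⟪R1 φ, ψ⟫_ℂ = ⟪(v : H), -A u + (starRingEnd ℂ w) • (u : H)⟫_ℂ := by rw [hu]
    _ = -⟪(v : H), A u⟫_ℂ + (starRingEnd ℂ w) * ⟪(v : H), (u : H)⟫_ℂ := by
        rw [inner_add_right, inner_neg_right, inner_smul_right]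
    _ = -⟪A v, (u : H)⟫_ℂ + (starRingEnd ℂ w) * ⟪(v : H), (u : H)⟫_ℂ := by
        rw [hsym v u]
    _ = ⟪-A v + w • (v : H), (u : H)⟫_ℂ := by
        rw [inner_add_left, inner_neg_left, inner_smul_left]
    _ = ⟪φ, R2 ψ⟫_ℂ := by rw [hv]

/-- For every `z ∈ ρ(A)` and `ℓ ∈ X'`, the vectors `(G(iεₙ) − G(z))ℓ`
belong to `D(A)`, form a Cauchy sequence w.r.t. the norm `‖ψ‖_(A) = ‖Aψ‖` and converge, in
the completion `D̂(A)`, to `K(z)ℓ := z • Rhat (G(z)ℓ)`. -/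
theorem G_diff_tendsto_K
    {H : Type*} [NormedAddCommGroup H] [InnerProductSpace ℂ H] [CompleteSpace H]
    {X : Type*} [NormedAddCommGroup X] [NormedSpace ℂ X] [CompleteSpace X]
    (A : H →ₗ.[ℂ] H) (hA : IsSelfAdjoint A)
    (hinj : ∀ φ : A.domain, A φ = 0 → (φ : H) = 0)
    (τ : A.domain →ₗ[ℂ] X)
    (hτbdd : ∃ c : ℝ, ∀ φ : A.domain,
      ‖τ φ‖ ≤ c * Real.sqrt (‖(φ : H)‖ ^ 2 + ‖A φ‖ ^ 2))
    -- the completion `D̂(A)` of `D(A)` w.r.t. the norm `‖φ‖_(A) = ‖Aφ‖`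
    {Dhat : Type*} [NormedAddCommGroup Dhat] [NormedSpace ℂ Dhat] [CompleteSpace Dhat]
    (iota : A.domain →ₗ[ℂ] Dhat)
    (hiso : ∀ φ : A.domain, ‖iota φ‖ = ‖A φ‖)
    (hdense : DenseRange iota)
    -- a sequence of nonzero reals converging to `0`, with the associated resolvents
    (ε : ℕ → ℝ) (hε0 : ∀ n, ε n ≠ 0) (hεlim : Filter.Tendsto ε Filter.atTop (nhds 0))
    (Rn : ℕ → H →L[ℂ] H) (hRn : ∀ n, IsResolvent A (Complex.I * (ε n : ℂ)) (Rn n))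
    (Rnbar : ℕ → H →L[ℂ] H) (hRnbar : ∀ n, IsResolvent A (-(Complex.I * (ε n : ℂ))) (Rnbar n))
    -- `Rhat φ = lim 𝓘 (R(iεₙ) φ)`
    (Rhat : H →L[ℂ] Dhat)
    (hRhat : ∀ φ : H, Filter.Tendsto (fun n => iota ⟨Rn n φ, (hRn n).mem φ⟩)
      Filter.atTop (nhds (Rhat φ)))
    -- the maps `G(iεₙ)`, with `⟪G(iεₙ)ℓ, ψ⟫ = ℓ (τ (R(-iεₙ) ψ))`
    (Gn : ℕ → StrongDual ℂ X →SL[starRingEnd ℂ] H)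
    (hGn : ∀ n, ∀ (ℓ : StrongDual ℂ X) (ψ : H),
      ⟪Gn n ℓ, ψ⟫_ℂ = ℓ (τ ⟨Rnbar n ψ, (hRnbar n).mem ψ⟩))
    -- a point `z ∈ ρ(A)` and the map `G(z)`, with `⟪G(z)ℓ, ψ⟫ = ℓ (τ (R(z̄) ψ))`
    (z : ℂ) (Rz Rzbar : H →L[ℂ] H)
    (hRz : IsResolvent A z Rz) (hRzbar : IsResolvent A (starRingEnd ℂ z) Rzbar)
    (Gz : StrongDual ℂ X →SL[starRingEnd ℂ] H)
    (hGz : ∀ (ℓ : StrongDual ℂ X) (ψ : H),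
      ⟪Gz ℓ, ψ⟫_ℂ = ℓ (τ ⟨Rzbar ψ, hRzbar.mem ψ⟩))
    (ℓ : StrongDual ℂ X) :
    ∃ hmem : ∀ n, Gn n ℓ - Gz ℓ ∈ A.domain,
      CauchySeq (fun n => iota ⟨Gn n ℓ - Gz ℓ, hmem n⟩) ∧
      Filter.Tendsto (fun n => iota ⟨Gn n ℓ - Gz ℓ, hmem n⟩) Filter.atTop
        (nhds (z • Rhat (Gz ℓ))) := by
  -- symmetry of `A`
  have hsym : ∀ x y : A.domain, ⟪A x, (y : H)⟫_ℂ = ⟪(x : H), A y⟫_ℂ := by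
    have h := LinearPMap.adjoint_isFormalAdjoint (T := A) hA.dense_domain
    rw [LinearPMap.isSelfAdjoint_def] at hA
    rw [hA] at h
    exact h
  -- the conjugate of `iεₙ` is `-iεₙ`
  have hconj : ∀ n, (starRingEnd ℂ) (Complex.I * (ε n : ℂ)) = -(Complex.I * (ε n : ℂ)) := by
    intro n
    simp [Complex.conj_I]
  -- the resolvent identity in `H`
  have hres : ∀ n (ψ : H),
      Rnbar n ψ - Rzbar ψ
        = ((starRingEnd ℂ) z + Complex.I * (ε n : ℂ)) • Rzbar (Rnbar n ψ) := by
    intro n ψ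
    set u : A.domain := ⟨Rnbar n ψ, (hRnbar n).mem ψ⟩ with hu_def
    have h1 : -A u + (-(Complex.I * (ε n : ℂ))) • (u : H) = ψ := (hRnbar n).left ψ
    have h2 : Rzbar (-A u + (starRingEnd ℂ z) • (u : H)) = (u : H) := hRzbar.right u
    have h3 : -A u + (starRingEnd ℂ z) • (u : H)
        = ψ + ((starRingEnd ℂ) z + Complex.I * (ε n : ℂ)) • (u : H) := by
      rw [← h1]; module
    rw [h3, map_add, map_smul] at h2
    have : (u : H) = Rnbar n ψ := rfl
    rw [this] at h2
    calc Rnbar n ψ - Rzbar ψ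
        = (Rzbar ψ + ((starRingEnd ℂ) z + Complex.I * (ε n : ℂ)) • Rzbar (Rnbar n ψ))
          - Rzbar ψ := by conv_lhs => rw [← h2]
      _ = ((starRingEnd ℂ) z + Complex.I * (ε n : ℂ)) • Rzbar (Rnbar n ψ) := by abel
  -- the key identity in `H`
  have hkey : ∀ n, Gn n ℓ - Gz ℓ = (z - Complex.I * (ε n : ℂ)) • Rn n (Gz ℓ) := by
    intro n
    apply ext_inner_right ℂ
    intro ψ
    have hdom : (⟨Rnbar n ψ, (hRnbar n).mem ψ⟩ : A.domain) - ⟨Rzbar ψ, hRzbar.mem ψ⟩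
        = ((starRingEnd ℂ) z + Complex.I * (ε n : ℂ)) •
            (⟨Rzbar (Rnbar n ψ), hRzbar.mem _⟩ : A.domain) :=
      Subtype.ext (hres n ψ)
    have hRnadj : ⟪Rn n (Gz ℓ), ψ⟫_ℂ = ⟪Gz ℓ, Rnbar n ψ⟫_ℂ := by
      refine resolvent_adjoint hsym (hRn n) ?_ _ _
      rw [hconj n]; exact hRnbar n
    calc ⟪Gn n ℓ - Gz ℓ, ψ⟫_ℂ
        = ℓ (τ ⟨Rnbar n ψ, (hRnbar n).mem ψ⟩) - ℓ (τ ⟨Rzbar ψ, hRzbar.mem ψ⟩) := by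
          rw [inner_sub_left, hGn n ℓ ψ, hGz ℓ ψ]
      _ = ℓ (τ ((⟨Rnbar n ψ, (hRnbar n).mem ψ⟩ : A.domain) - ⟨Rzbar ψ, hRzbar.mem ψ⟩)) := by
          rw [map_sub, map_sub]
      _ = ((starRingEnd ℂ) z + Complex.I * (ε n : ℂ)) *
            ℓ (τ ⟨Rzbar (Rnbar n ψ), hRzbar.mem _⟩) := by
          rw [hdom, map_smul, map_smul, smul_eq_mul]
      _ = ((starRingEnd ℂ) z + Complex.I * (ε n : ℂ)) * ⟪Gz ℓ, Rnbar n ψ⟫_ℂ := by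
          rw [hGz ℓ (Rnbar n ψ)]
      _ = ((starRingEnd ℂ) z + Complex.I * (ε n : ℂ)) * ⟪Rn n (Gz ℓ), ψ⟫_ℂ := by
          rw [hRnadj]
      _ = ⟪(z - Complex.I * (ε n : ℂ)) • Rn n (Gz ℓ), ψ⟫_ℂ := by
          rw [inner_smul_left]
          congr 1
          simp [Complex.conj_I]
  have hmem : ∀ n, Gn n ℓ - Gz ℓ ∈ A.domain := by
    intro n
    rw [hkey n]
    exact A.domain.smul_mem _ ((hRn n).mem _)
  refine ⟨hmem, ?_⟩
  have hseq : ∀ n, iota ⟨Gn n ℓ - Gz ℓ, hmem n⟩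
      = (z - Complex.I * (ε n : ℂ)) • iota ⟨Rn n (Gz ℓ), (hRn n).mem _⟩ := by
    intro n
    rw [← map_smul]
    congr 1
    exact Subtype.ext (hkey n)
  have hc : Filter.Tendsto (fun n => z - Complex.I * (ε n : ℂ)) Filter.atTop (nhds z) := by
    have h0 : Filter.Tendsto (fun n => ((ε n : ℝ) : ℂ)) Filter.atTop (nhds 0) := by
      have := (Complex.continuous_ofReal.tendsto 0).comp hεlim
      simpa [Function.comp_def] using this
    have := (tendsto_const_nhds (x := z) (f := Filter.atTop (α := ℕ))).sub
      (h0.const_mul Complex.I)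
    simpa using this
  have hten : Filter.Tendsto (fun n => iota ⟨Gn n ℓ - Gz ℓ, hmem n⟩) Filter.atTop
      (nhds (z • Rhat (Gz ℓ))) := by
    simp only [hseq]
    exact hc.smul (hRhat (Gz ℓ))
  exact ⟨hten.cauchySeq, hten⟩

end SingPert
end
end

section
/- For all w, z ∈ ρ(A) and all ℓ ∈ X', the element K(w)ℓ − K(z)ℓ of D̂(A) lies in the image of the canonical embedding 𝓘 : D(A) → D̂(A), and one has K(w)ℓ − K(z)ℓ = 𝓘((G(z) − G(w))ℓ). -/
open Complex Filter Topology
open scoped InnerProductSpace ComplexConjugate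

noncomputable section

namespace SingPert

/-- For all `w, z ∈ ρ(A)` and `ℓ ∈ X'`, the element
`K(w)ℓ − K(z)ℓ ∈ D̂(A)` lies in the image of the canonical embedding `𝓘 : D(A) → D̂(A)`
and `K(w)ℓ − K(z)ℓ = 𝓘((G(z) − G(w))ℓ)`, where `K(z) = z • (Rhat ∘ G(z))`. -/
theorem K_diff_eq_G_diff
    {H : Type*} [NormedAddCommGroup H] [InnerProductSpace ℂ H] [CompleteSpace H]
    {X : Type*} [NormedAddCommGroup X] [NormedSpace ℂ X] [CompleteSpace X]
    (A : H →ₗ.[ℂ] H) (hA : IsSelfAdjoint A)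
    (hinj : ∀ φ : A.domain, A φ = 0 → (φ : H) = 0)
    (τ : A.domain →ₗ[ℂ] X)
    (hτbdd : ∃ c : ℝ, ∀ φ : A.domain,
      ‖τ φ‖ ≤ c * Real.sqrt (‖(φ : H)‖ ^ 2 + ‖A φ‖ ^ 2))
    -- the completion `D̂(A)` of `D(A)` w.r.t. the norm `‖φ‖_(A) = ‖Aφ‖`
    {Dhat : Type*} [NormedAddCommGroup Dhat] [NormedSpace ℂ Dhat] [CompleteSpace Dhat]
    (iota : A.domain →ₗ[ℂ] Dhat)
    (hiso : ∀ φ : A.domain, ‖iota φ‖ = ‖A φ‖)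
    (hdense : DenseRange iota)
    -- a sequence of nonzero reals converging to `0`, with the associated resolvents
    (ε : ℕ → ℝ) (hε0 : ∀ n, ε n ≠ 0) (hεlim : Filter.Tendsto ε Filter.atTop (nhds 0))
    (Rn : ℕ → H →L[ℂ] H) (hRn : ∀ n, IsResolvent A (Complex.I * (ε n : ℂ)) (Rn n))
    -- `Rhat φ = lim 𝓘 (R(iεₙ) φ)`
    (Rhat : H →L[ℂ] Dhat)
    (hRhat : ∀ φ : H, Filter.Tendsto (fun n => iota ⟨Rn n φ, (hRn n).mem φ⟩)
      Filter.atTop (nhds (Rhat φ)))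
    -- points `z, w ∈ ρ(A)` and the maps `G(z)`, `G(w)`
    (z w : ℂ) (Rz Rzbar Rw Rwbar : H →L[ℂ] H)
    (hRz : IsResolvent A z Rz) (hRzbar : IsResolvent A (starRingEnd ℂ z) Rzbar)
    (hRw : IsResolvent A w Rw) (hRwbar : IsResolvent A (starRingEnd ℂ w) Rwbar)
    (Gz Gw : StrongDual ℂ X →SL[starRingEnd ℂ] H)
    (hGz : ∀ (ℓ : StrongDual ℂ X) (ψ : H),
      ⟪Gz ℓ, ψ⟫_ℂ = ℓ (τ ⟨Rzbar ψ, hRzbar.mem ψ⟩))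
    (hGw : ∀ (ℓ : StrongDual ℂ X) (ψ : H),
      ⟪Gw ℓ, ψ⟫_ℂ = ℓ (τ ⟨Rwbar ψ, hRwbar.mem ψ⟩))
    (ℓ : StrongDual ℂ X) :
    ∃ hmem : Gz ℓ - Gw ℓ ∈ A.domain,
      w • Rhat (Gw ℓ) - z • Rhat (Gz ℓ) = iota ⟨Gz ℓ - Gw ℓ, hmem⟩ := by
  classical
  have hAdj : A.adjoint = A := hA
  have hdenseA : Dense (A.domain : Set H) := hA.dense_domain
  -- symmetry of A
  have hsymm : ∀ φ ψ : A.domain, ⟪A φ, (ψ : H)⟫_ℂ = ⟪(φ : H), A ψ⟫_ℂ := by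
    have h := LinearPMap.adjoint_isFormalAdjoint (T := A) hdenseA
    rw [hAdj] at h
    exact h
  -- set u, v
  set u : H := Gz ℓ - Gw ℓ with hu
  set v : H := z • Gz ℓ - w • Gw ℓ with hv
  -- the key identity
  have key : ∀ φ : A.domain, ⟪v, (φ : H)⟫_ℂ = ⟪u, A φ⟫_ℂ := by
    intro φ
    have hz1 : (⟨Rzbar (-A φ + (starRingEnd ℂ z) • (φ : H)),
        hRzbar.mem _⟩ : A.domain) = φ := Subtype.ext (hRzbar.right φ)
    have hw1 : (⟨Rwbar (-A φ + (starRingEnd ℂ w) • (φ : H)),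
        hRwbar.mem _⟩ : A.domain) = φ := Subtype.ext (hRwbar.right φ)
    have hz2 : ⟪Gz ℓ, -A φ + (starRingEnd ℂ z) • (φ : H)⟫_ℂ = ℓ (τ φ) := by
      rw [hGz, hz1]
    have hw2 : ⟪Gw ℓ, -A φ + (starRingEnd ℂ w) • (φ : H)⟫_ℂ = ℓ (τ φ) := by
      rw [hGw, hw1]
    have h := hz2.trans hw2.symm
    simp only [inner_add_right, inner_neg_right, inner_smul_right] at h
    simp only [hu, hv, inner_sub_left, inner_smul_left]
    linear_combination h
  -- membership of u in the domain
  have hmem : u ∈ A.domain := by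
    rw [← hAdj]
    exact LinearPMap.mem_adjoint_domain_of_exists u ⟨v, fun x => key x⟩
  -- the value of A at u
  have hval : A ⟨u, hmem⟩ = v := by
    refine (hdenseA.eq_of_inner_left ℂ fun ψ' hψ => ?_)
    exact (hsymm ⟨u, hmem⟩ ⟨ψ', hψ⟩).trans ((key ⟨ψ', hψ⟩).symm : _)
  -- |⟪Aφ,φ⟫| is real
  have hreal : ∀ φ : A.domain, (⟪A φ, (φ : H)⟫_ℂ).im = 0 := by
    intro φ
    have h1 : (starRingEnd ℂ) ⟪A φ, (φ : H)⟫_ℂ = ⟪A φ, (φ : H)⟫_ℂ := by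
      rw [inner_conj_symm, hsymm]
    exact (Complex.conj_eq_iff_im.mp h1)
  -- norm bound: ‖A φ‖ ≤ ‖-A φ + (I t) • φ‖ for real t
  have hbound : ∀ (t : ℝ) (φ : A.domain),
      ‖A φ‖ ≤ ‖-A φ + (Complex.I * (t : ℂ)) • (φ : H)‖ := by
    intro t φ
    have hsq : ‖-A φ + (Complex.I * (t : ℂ)) • (φ : H)‖ ^ 2
        = ‖A φ‖ ^ 2 + t ^ 2 * ‖(φ : H)‖ ^ 2 := by
      rw [@norm_add_sq ℂ]
      have hre : RCLike.re ⟪-A φ, (Complex.I * (t : ℂ)) • (φ : H)⟫_ℂ = 0 := by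
        have him := hreal φ
        simp only [inner_smul_right, inner_neg_left, RCLike.re_to_complex, Complex.mul_re,
          Complex.mul_im, Complex.neg_re, Complex.neg_im, Complex.I_re, Complex.I_im,
          Complex.ofReal_re, Complex.ofReal_im, him]
        ring
      rw [hre, norm_neg, norm_smul]
      have hnc : ‖Complex.I * (t : ℂ)‖ = |t| := by simp
      rw [hnc, mul_pow, _root_.sq_abs]
      ring
    nlinarith [norm_nonneg (-A φ + (Complex.I * (t : ℂ)) • (φ : H)), norm_nonneg (A φ),
      sq_nonneg (t * ‖(φ : H)‖), norm_nonneg (φ : H), sq_nonneg t]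
  -- Rhat ∘ A = - iota
  have RhatA : ∀ φ : A.domain, Rhat (A φ) = - iota φ := by
    intro φ
    have h1 := hRhat (A φ)
    -- each term of the sequence
    have h2 : ∀ n, iota ⟨Rn n (A φ), (hRn n).mem _⟩
        = (Complex.I * (ε n : ℂ)) • iota ⟨Rn n (φ : H), (hRn n).mem _⟩ - iota φ := by
      intro n
      have hr := (hRn n).right φ
      have : (⟨Rn n (A φ), (hRn n).mem _⟩ : A.domain)
          = (Complex.I * (ε n : ℂ)) • ⟨Rn n (φ : H), (hRn n).mem _⟩ - φ := by
        apply Subtype.ext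
        have : - Rn n (A φ) + (Complex.I * (ε n : ℂ)) • Rn n (φ : H) = (φ : H) := by
          rw [← map_smul, ← map_neg, ← map_add]
          exact hr
        simp only [AddSubgroupClass.coe_sub, SetLike.val_smul]
        rw [eq_sub_iff_add_eq]
        conv_lhs => rw [← this]
        module
      rw [this, map_sub, map_smul]
    -- the norm of A (Rn n φ) is bounded by ‖φ‖
    have h3 : ∀ n, ‖A (⟨Rn n (φ : H), (hRn n).mem _⟩ : A.domain)‖ ≤ ‖(φ : H)‖ := by
      intro n
      have hl := (hRn n).left (φ : H)
      calc ‖A (⟨Rn n (φ : H), (hRn n).mem _⟩ : A.domain)‖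
          ≤ ‖-A (⟨Rn n (φ : H), (hRn n).mem _⟩ : A.domain)
              + (Complex.I * (ε n : ℂ)) • Rn n (φ : H)‖ := hbound (ε n) _
        _ = ‖(φ : H)‖ := by rw [hl]
    -- the smul term tends to 0
    have h4 : Filter.Tendsto
        (fun n => (Complex.I * (ε n : ℂ)) • iota ⟨Rn n (φ : H), (hRn n).mem _⟩)
        Filter.atTop (nhds 0) := by
      refine squeeze_zero_norm (f := fun n => (Complex.I * (ε n : ℂ)) • iota ⟨Rn n (φ : H), (hRn n).mem _⟩) (a := fun n => |ε n| * ‖(φ : H)‖) (fun n => ?_) ?_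
      · 
        rw [norm_smul, hiso]
        have : ‖Complex.I * (ε n : ℂ)‖ = |ε n| := by
          simp
        rw [this]
        exact mul_le_mul_of_nonneg_left (h3 n) (abs_nonneg _)
      · have : Filter.Tendsto (fun n => |ε n|) Filter.atTop (nhds 0) := by
          simpa using hεlim.abs
        simpa using this.mul_const ‖(φ : H)‖
    have h5 : Filter.Tendsto (fun n => iota ⟨Rn n (A φ), (hRn n).mem _⟩)
        Filter.atTop (nhds (0 - iota φ)) := by
      simp only [h2]
      exact h4.sub tendsto_const_nhds
    have := tendsto_nhds_unique h1 h5
    rw [this, zero_sub]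
  -- conclude
  refine ⟨hmem, ?_⟩
  have h6 := RhatA ⟨u, hmem⟩
  rw [hval] at h6
  have h7 : Rhat v = z • Rhat (Gz ℓ) - w • Rhat (Gw ℓ) := by
    rw [hv, map_sub, map_smul, map_smul]
  rw [h7] at h6
  have h8 : iota (⟨u, hmem⟩ : A.domain) = w • Rhat (Gw ℓ) - z • Rhat (Gz ℓ) := by
    have h9 := congrArg Neg.neg h6
    rw [neg_neg] at h9
    rw [← h9]
    abel
  exact h8.symm

end SingPert
end
end

section
/- Let : D̂(A) → H be the unique continuous extension of A through the canonical embedding 𝓘 (so Â∘𝓘 = A). Then for every z ∈ ρ(A) one has −Â∘K(z) = z G(z), i.e. Â(K(z)ℓ) = −z G(z)ℓ for every ℓ ∈ X'. -/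
open Complex Filter Topology
open scoped InnerProductSpace ComplexConjugate

noncomputable section

namespace SingPert

/-- Let `Â : D̂(A) → H` be the unique continuous extension of `A` through
the canonical embedding `𝓘` (so `Â ∘ 𝓘 = A`).  Then for every `z ∈ ρ(A)` one has
`-Â ∘ K(z) = z G(z)`, i.e. `Â (K(z)ℓ) = -z • G(z)ℓ` for all `ℓ ∈ X'`,
where `K(z)ℓ = z • Rhat (G(z)ℓ)`. -/
theorem Ahat_comp_K
    {H : Type*} [NormedAddCommGroup H] [InnerProductSpace ℂ H] [CompleteSpace H]
    {X : Type*} [NormedAddCommGroup X] [NormedSpace ℂ X] [CompleteSpace X]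
    (A : H →ₗ.[ℂ] H) (hA : IsSelfAdjoint A)
    (hinj : ∀ φ : A.domain, A φ = 0 → (φ : H) = 0)
    (τ : A.domain →ₗ[ℂ] X)
    (hτbdd : ∃ c : ℝ, ∀ φ : A.domain,
      ‖τ φ‖ ≤ c * Real.sqrt (‖(φ : H)‖ ^ 2 + ‖A φ‖ ^ 2))
    -- the completion `D̂(A)` of `D(A)` w.r.t. the norm `‖φ‖_(A) = ‖Aφ‖`
    {Dhat : Type*} [NormedAddCommGroup Dhat] [NormedSpace ℂ Dhat] [CompleteSpace Dhat]
    (iota : A.domain →ₗ[ℂ] Dhat)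
    (hiso : ∀ φ : A.domain, ‖iota φ‖ = ‖A φ‖)
    (hdense : DenseRange iota)
    -- `Â`, the continuous extension of `A` to `D̂(A)`
    (Ahat : Dhat →L[ℂ] H) (hAhat : ∀ φ : A.domain, Ahat (iota φ) = A φ)
    -- a sequence of nonzero reals converging to `0`, with the associated resolvents
    (ε : ℕ → ℝ) (hε0 : ∀ n, ε n ≠ 0) (hεlim : Filter.Tendsto ε Filter.atTop (nhds 0))
    (Rn : ℕ → H →L[ℂ] H) (hRn : ∀ n, IsResolvent A (Complex.I * (ε n : ℂ)) (Rn n))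
    -- `Rhat φ = lim 𝓘 (R(iεₙ) φ)`
    (Rhat : H →L[ℂ] Dhat)
    (hRhat : ∀ φ : H, Filter.Tendsto (fun n => iota ⟨Rn n φ, (hRn n).mem φ⟩)
      Filter.atTop (nhds (Rhat φ)))
    -- a point `z ∈ ρ(A)` and the map `G(z)`
    (z : ℂ) (Rz Rzbar : H →L[ℂ] H)
    (hRz : IsResolvent A z Rz) (hRzbar : IsResolvent A (starRingEnd ℂ z) Rzbar)
    (Gz : StrongDual ℂ X →SL[starRingEnd ℂ] H)
    (hGz : ∀ (ℓ : StrongDual ℂ X) (ψ : H),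
      ⟪Gz ℓ, ψ⟫_ℂ = ℓ (τ ⟨Rzbar ψ, hRzbar.mem ψ⟩)) :
    ∀ ℓ : StrongDual ℂ X, Ahat (z • Rhat (Gz ℓ)) = -(z • Gz ℓ) := by
  classical
  have hd := hA.dense_domain
  have hAdj : A.adjoint = A := hA
  -- symmetry of `A`
  have hsym : ∀ x y : A.domain, ⟪A x, (y : H)⟫_ℂ = ⟪(x : H), A y⟫_ℂ := by
    have h := LinearPMap.adjoint_isFormalAdjoint hd
    rw [hAdj] at h
    exact fun x y => h x y
  have him : ∀ ψ : A.domain, (⟪A ψ, (ψ : H)⟫_ℂ).im = 0 := by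
    intro ψ
    have h1 : ⟪A ψ, (ψ : H)⟫_ℂ = ⟪(ψ : H), A ψ⟫_ℂ := hsym ψ ψ
    have h2 : ⟪(ψ : H), A ψ⟫_ℂ = conj ⟪A ψ, (ψ : H)⟫_ℂ := (inner_conj_symm _ _).symm
    exact Complex.conj_eq_iff_im.mp (h1.trans h2).symm
  -- the resolvent bound ‖iε R(iε) φ‖ ≤ ‖φ‖
  have hnormIe : ∀ r : ℝ, ‖Complex.I * (r : ℂ)‖ = |r| := by
    intro r
    simp [Real.norm_eq_abs]
  have hbound : ∀ (n : ℕ) (φ : H), ‖(Complex.I * (ε n : ℂ)) • Rn n φ‖ ≤ ‖φ‖ := by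
    intro n φ
    set ψ : A.domain := ⟨Rn n φ, (hRn n).mem φ⟩ with hψ
    have hl : -A ψ + (Complex.I * (ε n : ℂ)) • Rn n φ = φ := (hRn n).left φ
    have hRψ : Rn n φ = (ψ : H) := rfl
    have hcross : (⟪-A ψ, (Complex.I * (ε n : ℂ)) • (ψ : H)⟫_ℂ).re = 0 := by
      rw [inner_smul_right, inner_neg_left]
      simp [Complex.mul_re, him ψ]
    have hsq := @norm_add_sq ℂ H _ _ _ (-A ψ) ((Complex.I * (ε n : ℂ)) • Rn n φ)
    rw [hl, hRψ] at hsq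
    simp only [RCLike.re_to_complex] at hsq
    rw [hcross] at hsq
    have h1 : ‖(Complex.I * (ε n : ℂ)) • Rn n φ‖ ^ 2 ≤ ‖φ‖ ^ 2 := by
      rw [hsq]
      simp only [norm_neg]
      nlinarith [sq_nonneg (‖A ψ‖)]
    have h2 := Real.sqrt_le_sqrt h1
    rwa [Real.sqrt_sq (norm_nonneg _), Real.sqrt_sq (norm_nonneg _)] at h2
  -- density of the range of A
  have hdenseRan : Dense ((LinearMap.range A.toFun : Submodule ℂ H) : Set H) := by
    rw [Submodule.dense_iff_topologicalClosure_eq_top,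
      Submodule.topologicalClosure_eq_top_iff]
    rw [Submodule.eq_bot_iff]
    intro φ hφ
    have horto : ∀ x : A.domain, ⟪A x, φ⟫_ℂ = 0 := fun x =>
      (Submodule.mem_orthogonal _ _).mp hφ (A x) (LinearMap.mem_range.mpr ⟨x, rfl⟩)
    have hmem : φ ∈ A.adjoint.domain := by
      apply LinearPMap.mem_adjoint_domain_of_exists
      refine ⟨0, fun x => ?_⟩
      rw [inner_zero_left, ← inner_conj_symm, horto x, map_zero]
    rw [hAdj] at hmem
    have hAφ : A ⟨φ, hmem⟩ = 0 := by
      apply hd.eq_zero_of_inner_left ℂ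
      intro v hv0
      have hv : (v : H) ∈ A.domain := hv0
      calc ⟪A ⟨φ, hmem⟩, (v : H)⟫_ℂ = ⟪φ, A ⟨(v : H), hv⟩⟫_ℂ := hsym ⟨φ, hmem⟩ ⟨(v : H), hv⟩
        _ = conj ⟪A ⟨(v : H), hv⟩, φ⟫_ℂ := (inner_conj_symm _ _).symm
        _ = 0 := by rw [horto]; simp
    exact hinj ⟨φ, hmem⟩ hAφ
  -- iεₙ R(iεₙ) φ → 0 for every φ
  have htend0 : ∀ φ : H,
      Tendsto (fun n => (Complex.I * (ε n : ℂ)) • Rn n φ) atTop (𝓝 0) := by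
    have hequi : Equicontinuous (fun n (φ : H) => (Complex.I * (ε n : ℂ)) • Rn n φ) := by
      apply Metric.equicontinuous_of_continuity_modulus id
      · simpa using (tendsto_id : Tendsto (fun x : ℝ => x) (𝓝 0) (𝓝 0))
      · intro x y n
        simp only [dist_eq_norm, id]
        rw [← smul_sub, ← map_sub]
        exact hbound n (x - y)
    have hclosed : IsClosed {φ : H |
        Tendsto (fun n => (Complex.I * (ε n : ℂ)) • Rn n φ) atTop (𝓝 0)} := by
      have := hequi.isClosed_setOf_tendsto (f := fun _ : H => (0 : H))
        (l := (atTop : Filter ℕ)) continuous_const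
      exact this
    have hsub : ((LinearMap.range A.toFun : Submodule ℂ H) : Set H) ⊆ {φ : H |
        Tendsto (fun n => (Complex.I * (ε n : ℂ)) • Rn n φ) atTop (𝓝 0)} := by
      rintro _ ⟨ψ, rfl⟩
      have key : ∀ n, Rn n (A ψ) = (Complex.I * (ε n : ℂ)) • Rn n (ψ : H) - (ψ : H) := by
        intro n
        have h := (hRn n).right ψ
        rw [map_add, map_neg, map_smul] at h
        have hgen : ∀ a b c : H, -a + b = c → a = b - c := by
          intro a b c hh; rw [← hh]; abel
        exact hgen _ _ _ h
      have hbnd : ∀ n, ‖(Complex.I * (ε n : ℂ)) • Rn n (A ψ)‖ ≤ |ε n| * (2 * ‖(ψ : H)‖) := by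
        intro n
        rw [key n, norm_smul, hnormIe]
        have h1 : ‖(Complex.I * (ε n : ℂ)) • Rn n (ψ : H) - (ψ : H)‖
            ≤ ‖(Complex.I * (ε n : ℂ)) • Rn n (ψ : H)‖ + ‖(ψ : H)‖ := norm_sub_le _ _
        have h2 := hbound n (ψ : H)
        calc |ε n| * ‖(Complex.I * (ε n : ℂ)) • Rn n (ψ : H) - (ψ : H)‖
            ≤ |ε n| * (‖(ψ : H)‖ + ‖(ψ : H)‖) := by
              apply mul_le_mul_of_nonneg_left _ (abs_nonneg _)
              exact h1.trans (by linarith)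
          _ = |ε n| * (2 * ‖(ψ : H)‖) := by ring
      have hglim : Tendsto (fun n => |ε n| * (2 * ‖(ψ : H)‖)) atTop (𝓝 0) := by
        have := (hεlim.abs).mul_const (2 * ‖(ψ : H)‖)
        simpa using this
      exact squeeze_zero_norm hbnd hglim
    intro φ
    have h1 : φ ∈ closure ((LinearMap.range A.toFun : Submodule ℂ H) : Set H) := hdenseRan φ
    exact (hclosed.closure_eq ▸ closure_mono hsub) h1
  -- conclusion
  intro ℓ
  set φ := Gz ℓ with hφdef
  have h1 : Tendsto (fun n => Ahat (iota ⟨Rn n φ, (hRn n).mem φ⟩)) atTop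
      (𝓝 (Ahat (Rhat φ))) := (Ahat.continuous.tendsto _).comp (hRhat φ)
  have hgen : ∀ a b c : H, -a + b = c → a = b - c := by
    intro a b c hh; rw [← hh]; abel
  have h2 : ∀ n, Ahat (iota ⟨Rn n φ, (hRn n).mem φ⟩)
      = (Complex.I * (ε n : ℂ)) • Rn n φ - φ := by
    intro n
    rw [hAhat]
    exact hgen _ _ _ ((hRn n).left φ)
  rw [funext h2] at h1
  have h3 : Tendsto (fun n => (Complex.I * (ε n : ℂ)) • Rn n φ - φ) atTop (𝓝 (0 - φ)) :=
    (htend0 φ).sub_const φ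
  have h4 : Ahat (Rhat φ) = -φ := by
    have := tendsto_nhds_unique h1 h3
    rw [this]; abel
  rw [map_smul, h4, smul_neg]

end SingPert
end
end

section
/- Assume (h3): ‖τφ‖_X ≤ c‖Aφ‖_H for all φ ∈ D(A), and let τ̂ : D̂(A) → X be the continuous extension of τ. Then for each z ∈ ρ(A) the map Γ(z) := τ̂∘K(z) : X' → X is a bounded conjugate-linear operator satisfying, for all w, z ∈ ρ(A): (i) Γ(z) − Γ(w) = (z − w)·Ğ(w)∘G(z), where Ğ(w) := τ∘R(w); and (ii) ℓ₁(Γ(z*)ℓ₂) = (ℓ₂(Γ(z)ℓ₁))* for all ℓ₁, ℓ₂ ∈ X' (equivalently J_X∘Γ(z*) = Γ(z)', with J_X : X → X'' the canonical injection). -/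
open Complex Filter Topology
open scoped InnerProductSpace ComplexConjugate

noncomputable section

namespace SingPert

section AuxiliaryLemmas

set_option linter.unusedSectionVars false

variable {H : Type*} [NormedAddCommGroup H] [InnerProductSpace ℂ H] [CompleteSpace H]
variable {A : H →ₗ.[ℂ] H}

/-- `A (R ψ) = p • R ψ - ψ`. -/
theorem IsResolvent.A_apply {p : ℂ} {R : H →L[ℂ] H} (h : IsResolvent A p R) (ψ : H) :
    A ⟨R ψ, h.mem ψ⟩ = p • R ψ - ψ := by
  rw [eq_sub_iff_add_eq]
  have e := congrArg (fun t => A ⟨R ψ, h.mem ψ⟩ + t) (h.left ψ)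
  simpa [add_neg_cancel_left] using e.symm

/-- `R (A χ) = p • R χ - χ`. -/
theorem IsResolvent.R_A {p : ℂ} {R : H →L[ℂ] H} (h : IsResolvent A p R) (χ : A.domain) :
    R (A χ) = p • R (χ : H) - (χ : H) := by
  have e := h.right χ
  rw [map_add, map_neg, map_smul] at e
  rw [eq_sub_iff_add_eq]
  have e2 := congrArg (fun t => R (A χ) + t) e
  simpa [add_neg_cancel_left] using e2.symm

/-- Symmetry of a self-adjoint `A`. -/
theorem sym (hA : IsSelfAdjoint A) (φ ψ : A.domain) :
    ⟪A φ, (ψ : H)⟫_ℂ = ⟪(φ : H), A ψ⟫_ℂ := by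
  have hd : Dense (A.domain : Set H) := hA.dense_domain
  have hEq : A.adjoint = A := LinearPMap.isSelfAdjoint_def.mp hA
  obtain ⟨hdom, hfun⟩ := LinearPMap.ext_iff.mp hEq
  have hmem : (φ : H) ∈ A.adjoint.domain := by rw [hdom]; exact φ.2
  have h1 := LinearPMap.adjoint_isFormalAdjoint hd ⟨(φ : H), hmem⟩ ψ
  have h2 : A.adjoint ⟨(φ : H), hmem⟩ = A φ := hfun (x := (φ : H)) (hf := hmem) (hg := φ.2)
  rw [h2] at h1
  exact h1

/-- The resolvent identity. -/
theorem res_id {p q : ℂ} {R S : H →L[ℂ] H} (hR : IsResolvent A p R) (hS : IsResolvent A q S)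
    (φ : H) : R φ = S φ + (q - p) • R (S φ) := by
  have e1 : R (-A ⟨S φ, hS.mem φ⟩) + p • R (S φ) = S φ := by
    have e := hR.right ⟨S φ, hS.mem φ⟩
    rw [map_add, map_smul] at e
    exact e
  calc R φ = R (-A ⟨S φ, hS.mem φ⟩ + q • S φ) := (congrArg R (hS.left φ)).symm
    _ = R (-A ⟨S φ, hS.mem φ⟩) + q • R (S φ) := by rw [map_add, map_smul]
    _ = (R (-A ⟨S φ, hS.mem φ⟩) + p • R (S φ)) + (q - p) • R (S φ) := by
        rw [sub_smul]; abel
    _ = S φ + (q - p) • R (S φ) := by rw [e1]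

/-- Resolvents commute. -/
theorem res_comm {p q : ℂ} {R S : H →L[ℂ] H} (hR : IsResolvent A p R) (hS : IsResolvent A q S)
    (φ : H) : R (S φ) = S (R φ) := by
  by_cases hpq : p = q
  · subst hpq
    have hRS : ∀ x, R x = S x := by
      intro x
      have := res_id hR hS x
      simpa using this
    rw [hRS (S φ), ← hRS φ]
  · have e1 := res_id hR hS φ
    have e2 := res_id hS hR φ
    have key : (q - p) • R (S φ) = (q - p) • S (R φ) := by
      have h1 : (q - p) • R (S φ) = R φ - S φ := by rw [e1]; abel
      have h2 : (p - q) • S (R φ) = S φ - R φ := by rw [e2]; abel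
      have h3 : (q - p) • S (R φ) = R φ - S φ := by
        have h4 : -((p - q) • S (R φ)) = -(S φ - R φ) := congrArg Neg.neg h2
        rw [← neg_smul] at h4
        simpa [neg_sub] using h4
      rw [h1, h3]
    exact smul_right_injective H (sub_ne_zero.mpr (Ne.symm hpq)) key

/-- Adjoint relation between resolvents at conjugate points. -/
theorem res_adj (hA : IsSelfAdjoint A) {p : ℂ} {R R' : H →L[ℂ] H} (hR : IsResolvent A p R)
    (hR' : IsResolvent A (starRingEnd ℂ p) R') (a b : H) :
    ⟪R a, b⟫_ℂ = ⟪a, R' b⟫_ℂ := by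
  conv_lhs => rw [← hR'.left b]
  rw [inner_add_right, inner_neg_right, inner_smul_right]
  rw [show ⟪R a, A ⟨R' b, hR'.mem b⟩⟫_ℂ = ⟪A ⟨R a, hR.mem a⟩, R' b⟫_ℂ from
    (sym hA ⟨R a, hR.mem a⟩ ⟨R' b, hR'.mem b⟩).symm]
  rw [hR.A_apply a, inner_sub_left, inner_smul_left]
  ring

/-- Norm identity at the points `i ε`. -/
theorem normsq (hA : IsSelfAdjoint A) {e : ℝ} {R : H →L[ℂ] H}
    (h : IsResolvent A (Complex.I * (e : ℂ)) R) (ψ : H) :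
    ‖A ⟨R ψ, h.mem ψ⟩‖ ^ 2 + e ^ 2 * ‖R ψ‖ ^ 2 = ‖ψ‖ ^ 2 := by
  set q : H := A ⟨R ψ, h.mem ψ⟩ with hq
  have him : (⟪q, R ψ⟫_ℂ).im = 0 := by
    rw [← Complex.conj_eq_iff_im, inner_conj_symm]
    exact (sym hA ⟨R ψ, h.mem ψ⟩ ⟨R ψ, h.mem ψ⟩).symm
  have e1 : -q + (Complex.I * (e : ℂ)) • R ψ = ψ := h.left ψ
  have e2 : ‖ψ‖ ^ 2 = ‖-q‖ ^ 2 + 2 * Complex.re ⟪-q, (Complex.I * (e : ℂ)) • R ψ⟫_ℂ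
      + ‖(Complex.I * (e : ℂ)) • R ψ‖ ^ 2 := by
    conv_lhs => rw [← e1]
    exact norm_add_sq (𝕜 := ℂ) _ _
  have e3 : Complex.re ⟪-q, (Complex.I * (e : ℂ)) • R ψ⟫_ℂ = 0 := by
    rw [inner_neg_left, inner_smul_right]
    simp [Complex.mul_re, Complex.mul_im, him]
  have e4 : ‖(Complex.I * (e : ℂ)) • R ψ‖ ^ 2 = e ^ 2 * ‖R ψ‖ ^ 2 := by
    rw [norm_smul]
    simp [mul_pow, _root_.sq_abs]
  rw [e2, e3, e4, norm_neg]
  ring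

theorem norm_R_le (hA : IsSelfAdjoint A) {e : ℝ} {R : H →L[ℂ] H}
    (h : IsResolvent A (Complex.I * (e : ℂ)) R) (ψ : H) :
    |e| * ‖R ψ‖ ≤ ‖ψ‖ := by
  have h0 := normsq hA h ψ
  have h2 : (|e| * ‖R ψ‖) ^ 2 ≤ ‖ψ‖ ^ 2 := by
    rw [mul_pow, _root_.sq_abs]
    nlinarith [sq_nonneg ‖A ⟨R ψ, h.mem ψ⟩‖]
  exact le_of_pow_le_pow_left₀ two_ne_zero (norm_nonneg _) (by simpa using h2)

theorem norm_A_R_le (hA : IsSelfAdjoint A) {e : ℝ} {R : H →L[ℂ] H}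
    (h : IsResolvent A (Complex.I * (e : ℂ)) R) (ψ : H) :
    ‖A ⟨R ψ, h.mem ψ⟩‖ ≤ ‖ψ‖ := by
  have h0 := normsq hA h ψ
  refine le_of_pow_le_pow_left₀ two_ne_zero (norm_nonneg _) ?_
  nlinarith [sq_nonneg (e * ‖R ψ‖)]

theorem eps_tendsto {ε : ℕ → ℝ} (hεlim : Filter.Tendsto ε Filter.atTop (nhds 0)) :
    Filter.Tendsto (fun n => Complex.I * (ε n : ℂ)) Filter.atTop (nhds 0) := by
  have h1 : Filter.Tendsto (fun n => ((ε n : ℝ) : ℂ)) Filter.atTop (nhds ((0 : ℝ) : ℂ)) :=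
    (Complex.continuous_ofReal.tendsto _).comp hεlim
  have h2 := h1.const_mul Complex.I
  simpa using h2

section Main

variable {X : Type*} [NormedAddCommGroup X] [NormedSpace ℂ X] [CompleteSpace X]
variable (τ : A.domain →ₗ[ℂ] X)
variable {Dhat : Type*} [NormedAddCommGroup Dhat] [NormedSpace ℂ Dhat] [CompleteSpace Dhat]
variable (iota : A.domain →ₗ[ℂ] Dhat)
variable {ε : ℕ → ℝ} {Rn : ℕ → H →L[ℂ] H}

theorem RhatR (hεlim : Filter.Tendsto ε Filter.atTop (nhds 0))
    (hRn : ∀ n, IsResolvent A (Complex.I * (ε n : ℂ)) (Rn n))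
    (Rhat : H →L[ℂ] Dhat)
    (hRhat : ∀ φ : H, Filter.Tendsto (fun n => iota ⟨Rn n φ, (hRn n).mem φ⟩)
      Filter.atTop (nhds (Rhat φ)))
    {q : ℂ} {S : H →L[ℂ] H} (hS : IsResolvent A q S) (φ : H) :
    Rhat φ = iota ⟨S φ, hS.mem φ⟩ + q • Rhat (S φ) := by
  have key : ∀ n, iota ⟨Rn n φ, (hRn n).mem φ⟩
      = iota ⟨S φ, hS.mem φ⟩
        + (q - Complex.I * (ε n : ℂ)) • iota ⟨Rn n (S φ), (hRn n).mem (S φ)⟩ := by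
    intro n
    have hH : Rn n φ = S φ + (q - Complex.I * (ε n : ℂ)) • Rn n (S φ) := res_id (hRn n) hS φ
    have hsub : (⟨Rn n φ, (hRn n).mem φ⟩ : A.domain)
        = ⟨S φ, hS.mem φ⟩
          + (q - Complex.I * (ε n : ℂ)) • ⟨Rn n (S φ), (hRn n).mem (S φ)⟩ := by
      apply Subtype.ext
      simpa using hH
    rw [hsub, map_add, map_smul]
  have t1 : Filter.Tendsto (fun n => iota ⟨S φ, hS.mem φ⟩
      + (q - Complex.I * (ε n : ℂ)) • iota ⟨Rn n (S φ), (hRn n).mem (S φ)⟩)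
      Filter.atTop (nhds (iota ⟨S φ, hS.mem φ⟩ + q • Rhat (S φ))) := by
    apply Filter.Tendsto.add tendsto_const_nhds
    have hsc : Filter.Tendsto (fun n => q - Complex.I * (ε n : ℂ)) Filter.atTop (nhds q) := by
      have := (eps_tendsto hεlim).const_sub q
      simpa using this
    exact hsc.smul (hRhat (S φ))
  exact tendsto_nhds_unique ((hRhat φ).congr key) t1

theorem RhatA (hA : IsSelfAdjoint A)
    (hiso : ∀ φ : A.domain, ‖iota φ‖ = ‖A φ‖)
    (hεlim : Filter.Tendsto ε Filter.atTop (nhds 0))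
    (hRn : ∀ n, IsResolvent A (Complex.I * (ε n : ℂ)) (Rn n))
    (Rhat : H →L[ℂ] Dhat)
    (hRhat : ∀ φ : H, Filter.Tendsto (fun n => iota ⟨Rn n φ, (hRn n).mem φ⟩)
      Filter.atTop (nhds (Rhat φ)))
    (χ : A.domain) : Rhat (A χ) = - iota χ := by
  have key : ∀ n, iota ⟨Rn n (A χ), (hRn n).mem (A χ)⟩
      = (Complex.I * (ε n : ℂ)) • iota ⟨Rn n (χ : H), (hRn n).mem (χ : H)⟩ - iota χ := by
    intro n
    have hH := (hRn n).R_A χ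
    have hsub : (⟨Rn n (A χ), (hRn n).mem (A χ)⟩ : A.domain)
        = (Complex.I * (ε n : ℂ)) • ⟨Rn n (χ : H), (hRn n).mem (χ : H)⟩ - χ := by
      apply Subtype.ext
      simpa using hH
    rw [hsub, map_sub, map_smul]
  have tz : Filter.Tendsto
      (fun n => (Complex.I * (ε n : ℂ)) • iota ⟨Rn n (χ : H), (hRn n).mem (χ : H)⟩)
      Filter.atTop (nhds 0) := by
    apply squeeze_zero_norm (a := fun n => |ε n| * ‖(χ : H)‖)
    · intro n
      rw [norm_smul]
      have h1 : ‖Complex.I * (ε n : ℂ)‖ = |ε n| := by simp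
      rw [h1, hiso]
      exact mul_le_mul_of_nonneg_left (norm_A_R_le hA (hRn n) (χ : H)) (abs_nonneg _)
    · have := (hεlim.abs).mul_const ‖(χ : H)‖
      simpa using this
  have t1 : Filter.Tendsto
      (fun n => (Complex.I * (ε n : ℂ)) • iota ⟨Rn n (χ : H), (hRn n).mem (χ : H)⟩ - iota χ)
      Filter.atTop (nhds (- iota χ)) := by
    have := tz.sub (tendsto_const_nhds (x := iota χ))
    simpa using this
  exact tendsto_nhds_unique ((hRhat (A χ)).congr key) t1

theorem Gdiff (hA : IsSelfAdjoint A)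
    {a b : ℂ} {Rabar Rb Rbbar : H →L[ℂ] H}
    (hRabar : IsResolvent A (starRingEnd ℂ a) Rabar)
    (hRb : IsResolvent A b Rb)
    (hRbbar : IsResolvent A (starRingEnd ℂ b) Rbbar)
    (Ga Gb : StrongDual ℂ X →SL[starRingEnd ℂ] H)
    (hGa : ∀ (ℓ : StrongDual ℂ X) (ψ : H),
      ⟪Ga ℓ, ψ⟫_ℂ = ℓ (τ ⟨Rabar ψ, hRabar.mem ψ⟩))
    (hGb : ∀ (ℓ : StrongDual ℂ X) (ψ : H),
      ⟪Gb ℓ, ψ⟫_ℂ = ℓ (τ ⟨Rbbar ψ, hRbbar.mem ψ⟩))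
    (ℓ : StrongDual ℂ X) :
    Gb ℓ = Ga ℓ + (a - b) • Rb (Ga ℓ) := by
  apply ext_inner_right ℂ
  intro ψ
  rw [inner_add_left, inner_smul_left, hGb, hGa,
    res_adj hA hRb hRbbar (Ga ℓ) ψ, hGa]
  have hsub : (⟨Rbbar ψ, hRbbar.mem ψ⟩ : A.domain) = ⟨Rabar ψ, hRabar.mem ψ⟩
      + (starRingEnd ℂ a - starRingEnd ℂ b) •
        ⟨Rabar (Rbbar ψ), hRabar.mem (Rbbar ψ)⟩ := by
    apply Subtype.ext
    have h1 := res_id hRbbar hRabar ψ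
    have h2 := res_comm hRbbar hRabar ψ
    simpa [h2] using h1
  rw [hsub, map_add, map_smul, map_add, map_smul, map_sub]
  simp only [smul_eq_mul]

theorem part_i (hA : IsSelfAdjoint A)
    (tauhat : Dhat →L[ℂ] X) (htauhat : ∀ φ : A.domain, tauhat (iota φ) = τ φ)
    (hεlim : Filter.Tendsto ε Filter.atTop (nhds 0))
    (hRn : ∀ n, IsResolvent A (Complex.I * (ε n : ℂ)) (Rn n))
    (Rhat : H →L[ℂ] Dhat)
    (hRhat : ∀ φ : H, Filter.Tendsto (fun n => iota ⟨Rn n φ, (hRn n).mem φ⟩)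
      Filter.atTop (nhds (Rhat φ)))
    {a b : ℂ} {Rabar Rb Rbbar : H →L[ℂ] H}
    (hRabar : IsResolvent A (starRingEnd ℂ a) Rabar)
    (hRb : IsResolvent A b Rb)
    (hRbbar : IsResolvent A (starRingEnd ℂ b) Rbbar)
    (Ga Gb : StrongDual ℂ X →SL[starRingEnd ℂ] H)
    (hGa : ∀ (ℓ : StrongDual ℂ X) (ψ : H),
      ⟪Ga ℓ, ψ⟫_ℂ = ℓ (τ ⟨Rabar ψ, hRabar.mem ψ⟩))
    (hGb : ∀ (ℓ : StrongDual ℂ X) (ψ : H),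
      ⟪Gb ℓ, ψ⟫_ℂ = ℓ (τ ⟨Rbbar ψ, hRbbar.mem ψ⟩))
    (ℓ : StrongDual ℂ X) :
    tauhat (a • Rhat (Ga ℓ)) - tauhat (b • Rhat (Gb ℓ))
      = (a - b) • τ ⟨Rb (Ga ℓ), hRb.mem (Ga ℓ)⟩ := by
  have hg : Gb ℓ = Ga ℓ + (a - b) • Rb (Ga ℓ) :=
    Gdiff τ hA hRabar hRb hRbbar Ga Gb hGa hGb ℓ
  have h9 : Rhat (Ga ℓ) = iota ⟨Rb (Ga ℓ), hRb.mem (Ga ℓ)⟩ + b • Rhat (Rb (Ga ℓ)) :=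
    RhatR iota hεlim hRn Rhat hRhat hRb (Ga ℓ)
  have hD : a • Rhat (Ga ℓ) - b • Rhat (Gb ℓ)
      = (a - b) • iota ⟨Rb (Ga ℓ), hRb.mem (Ga ℓ)⟩ := by
    rw [hg, map_add, map_smul, h9]
    module
  rw [← map_sub, hD, map_smul, htauhat]

theorem exists_w (hA : IsSelfAdjoint A)
    (hiso : ∀ φ : A.domain, ‖iota φ‖ = ‖A φ‖)
    (tauhat : Dhat →L[ℂ] X) (htauhat : ∀ φ : A.domain, tauhat (iota φ) = τ φ)
    (hεlim : Filter.Tendsto ε Filter.atTop (nhds 0))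
    (hRn : ∀ n, IsResolvent A (Complex.I * (ε n : ℂ)) (Rn n))
    (Rhat : H →L[ℂ] Dhat)
    (hRhat : ∀ φ : H, Filter.Tendsto (fun n => iota ⟨Rn n φ, (hRn n).mem φ⟩)
      Filter.atTop (nhds (Rhat φ)))
    {z : ℂ} (hz : z ≠ 0) {Rzbar : H →L[ℂ] H}
    (hRzbar : IsResolvent A (starRingEnd ℂ z) Rzbar)
    (Gz : StrongDual ℂ X →SL[starRingEnd ℂ] H)
    (hGz : ∀ (ℓ : StrongDual ℂ X) (ψ : H),
      ⟪Gz ℓ, ψ⟫_ℂ = ℓ (τ ⟨Rzbar ψ, hRzbar.mem ψ⟩))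
    (ℓ : StrongDual ℂ X) :
    ∃ ww : A.domain, A ww = Gz ℓ := by
  set f : H →L[ℂ] ℂ := -((ℓ.comp tauhat).comp Rhat) with hf
  set hv : H := (InnerProductSpace.toDual ℂ H).symm f with hhv
  have hvec_inner : ∀ ψ : H, ⟪hv, ψ⟫_ℂ = -(ℓ (tauhat (Rhat ψ))) := by
    intro ψ
    rw [hhv, InnerProductSpace.toDual_symm_apply]
    simp [hf]
  have hAvec : ∀ χ : A.domain, ⟪hv, A χ⟫_ℂ = ℓ (τ χ) := by
    intro χ
    rw [hvec_inner, RhatA iota hA hiso hεlim hRn Rhat hRhat χ, map_neg, map_neg, htauhat,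
      neg_neg]
  set wv : H := z⁻¹ • (hv + Gz ℓ) with hwv
  have hweak : ∀ χ : A.domain, ⟪wv, A χ⟫_ℂ = ⟪Gz ℓ, (χ : H)⟫_ℂ := by
    intro χ
    rw [hwv, inner_smul_left, inner_add_left, hAvec]
    have h1 : ⟪Gz ℓ, A χ⟫_ℂ = starRingEnd ℂ z * ⟪Gz ℓ, (χ : H)⟫_ℂ - ℓ (τ χ) := by
      rw [hGz ℓ (A χ)]
      have hsub : (⟨Rzbar (A χ), hRzbar.mem (A χ)⟩ : A.domain)
          = (starRingEnd ℂ z) • ⟨Rzbar (χ : H), hRzbar.mem (χ : H)⟩ - χ := by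
        apply Subtype.ext
        simpa using hRzbar.R_A χ
      rw [hsub, map_sub, map_smul, map_sub, map_smul, ← hGz ℓ (χ : H)]
      simp [smul_eq_mul]
    rw [h1]
    have hzc : starRingEnd ℂ z ≠ 0 := by simpa using hz
    rw [map_inv₀, add_sub_cancel, inv_mul_cancel_left₀ hzc]
  have hd : Dense (A.domain : Set H) := hA.dense_domain
  have hmem : wv ∈ A.adjoint.domain :=
    LinearPMap.mem_adjoint_domain_of_exists wv ⟨Gz ℓ, fun χ => (hweak χ).symm⟩
  have happ : A.adjoint ⟨wv, hmem⟩ = Gz ℓ :=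
    LinearPMap.adjoint_apply_eq hd _ (fun χ => (hweak χ).symm)
  obtain ⟨hdom, hfun⟩ := LinearPMap.ext_iff.mp (LinearPMap.isSelfAdjoint_def.mp hA)
  have hmem' : wv ∈ A.domain := by rw [← hdom]; exact hmem
  exact ⟨⟨wv, hmem'⟩, (hfun (x := wv) (hf := hmem) (hg := hmem')).symm.trans happ⟩

theorem keylimit (hA : IsSelfAdjoint A)
    (tauhat : Dhat →L[ℂ] X) (htauhat : ∀ φ : A.domain, tauhat (iota φ) = τ φ)
    (hεlim : Filter.Tendsto ε Filter.atTop (nhds 0))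
    (hRn : ∀ n, IsResolvent A (Complex.I * (ε n : ℂ)) (Rn n))
    (Rhat : H →L[ℂ] Dhat)
    (hRhat : ∀ φ : H, Filter.Tendsto (fun n => iota ⟨Rn n φ, (hRn n).mem φ⟩)
      Filter.atTop (nhds (Rhat φ)))
    {z : ℂ} {Rzbar : H →L[ℂ] H}
    (hRzbar : IsResolvent A (starRingEnd ℂ z) Rzbar)
    (Gz : StrongDual ℂ X →SL[starRingEnd ℂ] H)
    (hGz : ∀ (ℓ : StrongDual ℂ X) (ψ : H),
      ⟪Gz ℓ, ψ⟫_ℂ = ℓ (τ ⟨Rzbar ψ, hRzbar.mem ψ⟩))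
    (ℓ ℓ' : StrongDual ℂ X) (wu wv : A.domain)
    (hwu : A wu = Gz ℓ) (hwv : A wv = Gz ℓ') :
    ℓ (tauhat (Rhat (Gz ℓ')))
      = ⟪Gz ℓ, Gz ℓ'⟫_ℂ - starRingEnd ℂ z * ⟪Gz ℓ, (wv : H)⟫_ℂ := by
  have t1 : Filter.Tendsto (fun n => ℓ (τ ⟨Rn n (Gz ℓ'), (hRn n).mem (Gz ℓ')⟩))
      Filter.atTop (nhds (ℓ (tauhat (Rhat (Gz ℓ'))))) := by
    have h0 := (tauhat.continuous.tendsto (Rhat (Gz ℓ'))).comp (hRhat (Gz ℓ'))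
    have h1 := (ℓ.continuous.tendsto _).comp h0
    refine h1.congr (fun n => ?_)
    simp [Function.comp, htauhat]
  have expand : ∀ n, ℓ (τ ⟨Rn n (Gz ℓ'), (hRn n).mem (Gz ℓ')⟩)
      = ⟪Gz ℓ, Gz ℓ'⟫_ℂ + (starRingEnd ℂ z - Complex.I * (ε n : ℂ)) *
        (-⟪Gz ℓ, (wv : H)⟫_ℂ + (Complex.I * (ε n : ℂ)) *
          ⟪(wu : H), (Complex.I * (ε n : ℂ)) • Rn n (wv : H) - (wv : H)⟫_ℂ) := by
    intro n
    have hsub1 : (⟨Rn n (Gz ℓ'), (hRn n).mem (Gz ℓ')⟩ : A.domain)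
        = ⟨Rzbar (Gz ℓ'), hRzbar.mem (Gz ℓ')⟩
          + (starRingEnd ℂ z - Complex.I * (ε n : ℂ)) •
            ⟨Rzbar (Rn n (Gz ℓ')), hRzbar.mem (Rn n (Gz ℓ'))⟩ := by
      apply Subtype.ext
      have h1 := res_id (hRn n) hRzbar (Gz ℓ')
      have h2 := res_comm (hRn n) hRzbar (Gz ℓ')
      simpa [h2] using h1
    have E1 : ℓ (τ ⟨Rn n (Gz ℓ'), (hRn n).mem (Gz ℓ')⟩)
        = ⟪Gz ℓ, Gz ℓ'⟫_ℂ + (starRingEnd ℂ z - Complex.I * (ε n : ℂ)) * ⟪Gz ℓ, Rn n (Gz ℓ')⟫_ℂ := by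
      rw [hsub1, map_add, map_smul, map_add, map_smul, ← hGz ℓ (Gz ℓ'), ← hGz ℓ (Rn n (Gz ℓ'))]
      simp [smul_eq_mul]
    have h3 : ⟪Gz ℓ, Rn n (wv : H)⟫_ℂ
        = ⟪(wu : H), (Complex.I * (ε n : ℂ)) • Rn n (wv : H) - (wv : H)⟫_ℂ := by
      calc ⟪Gz ℓ, Rn n (wv : H)⟫_ℂ = ⟪A wu, Rn n (wv : H)⟫_ℂ := by rw [hwu]
        _ = ⟪(wu : H), A ⟨Rn n (wv : H), (hRn n).mem (wv : H)⟩⟫_ℂ :=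
            sym hA wu ⟨Rn n (wv : H), (hRn n).mem (wv : H)⟩
        _ = ⟪(wu : H), (Complex.I * (ε n : ℂ)) • Rn n (wv : H) - (wv : H)⟫_ℂ := by
            rw [(hRn n).A_apply (wv : H)]
    have E2 : ⟪Gz ℓ, Rn n (Gz ℓ')⟫_ℂ = -⟪Gz ℓ, (wv : H)⟫_ℂ + (Complex.I * (ε n : ℂ)) *
        ⟪(wu : H), (Complex.I * (ε n : ℂ)) • Rn n (wv : H) - (wv : H)⟫_ℂ := by
      have hv' : Rn n (Gz ℓ') = (Complex.I * (ε n : ℂ)) • Rn n (wv : H) - (wv : H) := by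
        rw [← hwv]; exact (hRn n).R_A wv
      rw [hv', inner_sub_right, inner_smul_right, h3]
      ring
    rw [E1, E2]
  have t2 : Filter.Tendsto (fun n => ⟪Gz ℓ, Gz ℓ'⟫_ℂ
      + (starRingEnd ℂ z - Complex.I * (ε n : ℂ)) *
        (-⟪Gz ℓ, (wv : H)⟫_ℂ + (Complex.I * (ε n : ℂ)) *
          ⟪(wu : H), (Complex.I * (ε n : ℂ)) • Rn n (wv : H) - (wv : H)⟫_ℂ))
      Filter.atTop
      (nhds (⟪Gz ℓ, Gz ℓ'⟫_ℂ + (starRingEnd ℂ z) * (-⟪Gz ℓ, (wv : H)⟫_ℂ + 0))) := by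
    apply tendsto_const_nhds.add
    apply Filter.Tendsto.mul
    · have := (eps_tendsto hεlim).const_sub (starRingEnd ℂ z)
      simpa using this
    · apply tendsto_const_nhds.add
      apply squeeze_zero_norm
        (a := fun n => |ε n| * (‖(wu : H)‖ * (‖(wv : H)‖ + ‖(wv : H)‖)))
      · intro n
        rw [norm_mul]
        have h1 : ‖Complex.I * (ε n : ℂ)‖ = |ε n| := by simp
        rw [h1]
        apply mul_le_mul_of_nonneg_left ?_ (abs_nonneg _)
        refine le_trans (norm_inner_le_norm _ _) ?_
        apply mul_le_mul_of_nonneg_left ?_ (norm_nonneg _)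
        calc ‖(Complex.I * (ε n : ℂ)) • Rn n (wv : H) - (wv : H)‖
            ≤ ‖(Complex.I * (ε n : ℂ)) • Rn n (wv : H)‖ + ‖(wv : H)‖ := norm_sub_le _ _
          _ ≤ ‖(wv : H)‖ + ‖(wv : H)‖ := by
              have h2 : ‖(Complex.I * (ε n : ℂ)) • Rn n (wv : H)‖
                  = |ε n| * ‖Rn n (wv : H)‖ := by rw [norm_smul, h1]
              rw [h2]
              exact add_le_add_left (norm_R_le hA (hRn n) _) _
      · have := (hεlim.abs).mul_const (‖(wu : H)‖ * (‖(wv : H)‖ + ‖(wv : H)‖))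
        simpa using this
  have hfin := tendsto_nhds_unique (t1.congr expand) t2
  rw [hfin]
  ring

end Main

end AuxiliaryLemmas


/-- Assume (h3) `‖τφ‖ ≤ c ‖Aφ‖` and let `τ̂ : D̂(A) → X` be the continuous
extension of `τ`.  Then `Γ(z) := τ̂ ∘ K(z) : X' → X` is a bounded conjugate-linear operator
satisfying `Γ(z) − Γ(w) = (z − w) Ğ(w) ∘ G(z)` (where `Ğ(w) = τ ∘ R(w)`) and
`ℓ₁(Γ(z̄)ℓ₂) = (ℓ₂(Γ(z)ℓ₁))*`.  Here `K(z)ℓ = z • Rhat (G(z)ℓ)`. -/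
theorem Gamma_bounded_diff_and_symmetry
    {H : Type*} [NormedAddCommGroup H] [InnerProductSpace ℂ H] [CompleteSpace H]
    {X : Type*} [NormedAddCommGroup X] [NormedSpace ℂ X] [CompleteSpace X]
    (A : H →ₗ.[ℂ] H) (hA : IsSelfAdjoint A)
    (hinj : ∀ φ : A.domain, A φ = 0 → (φ : H) = 0)
    (τ : A.domain →ₗ[ℂ] X)
    -- (h3)
    (hτbdd : ∃ c : ℝ, ∀ φ : A.domain, ‖τ φ‖ ≤ c * ‖A φ‖)
    -- the completion `D̂(A)` of `D(A)` w.r.t. the norm `‖φ‖_(A) = ‖Aφ‖`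
    {Dhat : Type*} [NormedAddCommGroup Dhat] [NormedSpace ℂ Dhat] [CompleteSpace Dhat]
    (iota : A.domain →ₗ[ℂ] Dhat)
    (hiso : ∀ φ : A.domain, ‖iota φ‖ = ‖A φ‖)
    (hdense : DenseRange iota)
    -- `τ̂`, the continuous extension of `τ` to `D̂(A)`
    (tauhat : Dhat →L[ℂ] X) (htauhat : ∀ φ : A.domain, tauhat (iota φ) = τ φ)
    -- a sequence of nonzero reals converging to `0`, with the associated resolvents
    (ε : ℕ → ℝ) (hε0 : ∀ n, ε n ≠ 0) (hεlim : Filter.Tendsto ε Filter.atTop (nhds 0))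
    (Rn : ℕ → H →L[ℂ] H) (hRn : ∀ n, IsResolvent A (Complex.I * (ε n : ℂ)) (Rn n))
    -- `Rhat φ = lim 𝓘 (R(iεₙ) φ)`
    (Rhat : H →L[ℂ] Dhat)
    (hRhat : ∀ φ : H, Filter.Tendsto (fun n => iota ⟨Rn n φ, (hRn n).mem φ⟩)
      Filter.atTop (nhds (Rhat φ)))
    -- points `z, w ∈ ρ(A)` and the maps `G(z)`, `G(z̄)`, `G(w)`
    (z w : ℂ) (Rz Rzbar Rw Rwbar : H →L[ℂ] H)
    (hRz : IsResolvent A z Rz) (hRzbar : IsResolvent A (starRingEnd ℂ z) Rzbar)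
    (hRw : IsResolvent A w Rw) (hRwbar : IsResolvent A (starRingEnd ℂ w) Rwbar)
    (Gz Gzbar Gw : StrongDual ℂ X →SL[starRingEnd ℂ] H)
    (hGz : ∀ (ℓ : StrongDual ℂ X) (ψ : H),
      ⟪Gz ℓ, ψ⟫_ℂ = ℓ (τ ⟨Rzbar ψ, hRzbar.mem ψ⟩))
    (hGzbar : ∀ (ℓ : StrongDual ℂ X) (ψ : H),
      ⟪Gzbar ℓ, ψ⟫_ℂ = ℓ (τ ⟨Rz ψ, hRz.mem ψ⟩))
    (hGw : ∀ (ℓ : StrongDual ℂ X) (ψ : H),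
      ⟪Gw ℓ, ψ⟫_ℂ = ℓ (τ ⟨Rwbar ψ, hRwbar.mem ψ⟩)) :
    -- `Γ(z)` is bounded
    (∃ C : ℝ, ∀ ℓ : StrongDual ℂ X, ‖tauhat (z • Rhat (Gz ℓ))‖ ≤ C * ‖ℓ‖) ∧
    -- (i) `Γ(z) − Γ(w) = (z − w) Ğ(w) ∘ G(z)`
    (∀ ℓ : StrongDual ℂ X,
      tauhat (z • Rhat (Gz ℓ)) - tauhat (w • Rhat (Gw ℓ))
        = (z - w) • τ ⟨Rw (Gz ℓ), hRw.mem (Gz ℓ)⟩) ∧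
    -- (ii) `ℓ₁(Γ(z̄)ℓ₂) = (ℓ₂(Γ(z)ℓ₁))*`
    (∀ ℓ₁ ℓ₂ : StrongDual ℂ X,
      ℓ₁ (tauhat ((starRingEnd ℂ z) • Rhat (Gzbar ℓ₂)))
        = starRingEnd ℂ (ℓ₂ (tauhat (z • Rhat (Gz ℓ₁))))) := by
  refine ⟨?_, ?_, ?_⟩
  · -- boundedness
    refine ⟨‖tauhat‖ * (‖z‖ * (‖Rhat‖ * ‖Gz‖)), fun ℓ => ?_⟩
    calc ‖tauhat (z • Rhat (Gz ℓ))‖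
        ≤ ‖tauhat‖ * ‖z • Rhat (Gz ℓ)‖ := tauhat.le_opNorm _
      _ = ‖tauhat‖ * (‖z‖ * ‖Rhat (Gz ℓ)‖) := by rw [norm_smul]
      _ ≤ ‖tauhat‖ * (‖z‖ * (‖Rhat‖ * ‖Gz ℓ‖)) := by
          gcongr
          exact Rhat.le_opNorm _
      _ ≤ ‖tauhat‖ * (‖z‖ * (‖Rhat‖ * (‖Gz‖ * ‖ℓ‖))) := by
          gcongr
          exact Gz.le_opNorm _
      _ = ‖tauhat‖ * (‖z‖ * (‖Rhat‖ * ‖Gz‖)) * ‖ℓ‖ := by ring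
  · -- (i)
    intro ℓ
    exact part_i τ iota hA tauhat htauhat hεlim hRn Rhat hRhat
      hRzbar hRw hRwbar Gz Gw hGz hGw ℓ
  · -- (ii)
    intro ℓ₁ ℓ₂
    rcases eq_or_ne z 0 with rfl | hz
    · simp
    · have hRzbb : IsResolvent A (starRingEnd ℂ (starRingEnd ℂ z)) Rz := by
        rw [Complex.conj_conj]
        exact hRz
      have hGzbar' : ∀ (ℓ : StrongDual ℂ X) (ψ : H),
          ⟪Gzbar ℓ, ψ⟫_ℂ = ℓ (τ ⟨Rz ψ, hRzbb.mem ψ⟩) := hGzbar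
      have hi := part_i τ iota hA tauhat htauhat hεlim hRn Rhat hRhat
        hRzbar hRzbar hRzbb Gz Gzbar hGz hGzbar' ℓ₂
      obtain ⟨wu, hwu⟩ := exists_w τ iota hA hiso tauhat htauhat hεlim hRn Rhat hRhat
        hz hRzbar Gz hGz ℓ₁
      obtain ⟨wv, hwv⟩ := exists_w τ iota hA hiso tauhat htauhat hεlim hRn Rhat hRhat
        hz hRzbar Gz hGz ℓ₂
      have K12 := keylimit τ iota hA tauhat htauhat hεlim hRn Rhat hRhat
        hRzbar Gz hGz ℓ₁ ℓ₂ wu wv hwu hwv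
      have K21 := keylimit τ iota hA tauhat htauhat hεlim hRn Rhat hRhat
        hRzbar Gz hGz ℓ₂ ℓ₁ wv wu hwv hwu
      have hsymw : ⟪Gz ℓ₁, (wv : H)⟫_ℂ = ⟪(wu : H), Gz ℓ₂⟫_ℂ := by
        calc ⟪Gz ℓ₁, (wv : H)⟫_ℂ = ⟪A wu, (wv : H)⟫_ℂ := by rw [hwu]
          _ = ⟪(wu : H), A wv⟫_ℂ := sym hA wu wv
          _ = ⟪(wu : H), Gz ℓ₂⟫_ℂ := by rw [hwv]
      have lhs_eq : ℓ₁ (tauhat ((starRingEnd ℂ z) • Rhat (Gzbar ℓ₂)))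
          = ℓ₁ (tauhat (z • Rhat (Gz ℓ₂)))
            - (z - starRingEnd ℂ z) * ⟪Gz ℓ₁, Gz ℓ₂⟫_ℂ := by
        have h5 := congrArg ℓ₁ hi
        rw [map_sub] at h5
        have h6 : ℓ₁ ((z - starRingEnd ℂ z) • τ ⟨Rzbar (Gz ℓ₂), hRzbar.mem (Gz ℓ₂)⟩)
            = (z - starRingEnd ℂ z) * ⟪Gz ℓ₁, Gz ℓ₂⟫_ℂ := by
          rw [map_smul, smul_eq_mul, ← hGz ℓ₁ (Gz ℓ₂)]
        rw [h6] at h5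
        linear_combination -h5
      have ha : ℓ₁ (tauhat (z • Rhat (Gz ℓ₂)))
          = z * (⟪Gz ℓ₁, Gz ℓ₂⟫_ℂ - starRingEnd ℂ z * ⟪Gz ℓ₁, (wv : H)⟫_ℂ) := by
        rw [map_smul, map_smul, smul_eq_mul, K12]
      have hb : ℓ₂ (tauhat (z • Rhat (Gz ℓ₁)))
          = z * (⟪Gz ℓ₂, Gz ℓ₁⟫_ℂ - starRingEnd ℂ z * ⟪Gz ℓ₂, (wu : H)⟫_ℂ) := by
        rw [map_smul, map_smul, smul_eq_mul, K21]
      rw [lhs_eq, ha, hb, map_mul, map_sub, map_mul, Complex.conj_conj,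
        inner_conj_symm, inner_conj_symm, ← hsymw]
      ring

end SingPert
end
end

section
/- Assume (h1) τ is surjective, (h2) the kernel of τ is dense in H, and (h3) ‖τφ‖_X ≤ c‖Aφ‖_H for all φ ∈ D(A). Let φ ∈ H, z ∈ ρ(A), ψ ∈ D̂(A) and Q ∈ X' be such that φ − G(z)Q ∈ D(A) and 𝓘(φ − G(z)Q) = ψ + K(z)Q in D̂(A). Then the pair (ψ, Q) is unique, and it is independent of z: if also φ − G(w)Q̃ ∈ D(A) and 𝓘(φ − G(w)Q̃) = ψ̃ + K(w)Q̃ for some w ∈ ρ(A), ψ̃ ∈ D̂(A), Q̃ ∈ X', then ψ̃ = ψ and Q̃ = Q. -/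
open Complex Filter Topology
open scoped InnerProductSpace ComplexConjugate

noncomputable section

namespace SingPert

section Aux

set_option linter.unusedSectionVars false

variable {H : Type*} [NormedAddCommGroup H] [InnerProductSpace ℂ H] [CompleteSpace H]

theorem IsResolvent.map_eq {A : H →ₗ.[ℂ] H} {z : ℂ} {R : H →L[ℂ] H}
    (hR : IsResolvent A z R) (φ : H) :
    A ⟨R φ, hR.mem φ⟩ = z • R φ - φ := by
  have h := hR.left φ
  calc A ⟨R φ, hR.mem φ⟩ = z • R φ - (-A ⟨R φ, hR.mem φ⟩ + z • R φ) := by abel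
    _ = z • R φ - φ := by rw [h]

/-- The resolvent identity. -/
theorem resolvent_sub {A : H →ₗ.[ℂ] H} {u v : ℂ} {Ru Rv : H →L[ℂ] H}
    (hRu : IsResolvent A u Ru) (hRv : IsResolvent A v Rv) (ψ : H) :
    Ru ψ = Rv ψ + (v - u) • Ru (Rv ψ) := by
  have hψ : -A ⟨Rv ψ, hRv.mem ψ⟩ + v • Rv ψ = ψ := hRv.left ψ
  calc Ru ψ = Ru (-A ⟨Rv ψ, hRv.mem ψ⟩ + v • Rv ψ) := by rw [hψ]
    _ = Ru ((-A ⟨Rv ψ, hRv.mem ψ⟩ + u • Rv ψ) + (v - u) • Rv ψ) := by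
        congr 1; module
    _ = Ru (-A ⟨Rv ψ, hRv.mem ψ⟩ + u • Rv ψ) + (v - u) • Ru (Rv ψ) := by
        rw [map_add, map_smul]
    _ = Rv ψ + (v - u) • Ru (Rv ψ) := by rw [hRu.right ⟨Rv ψ, hRv.mem ψ⟩]

/-- `R(z̄)* = R(z)`. -/
theorem resolvent_adjoint_s8 {A : H →ₗ.[ℂ] H} (hsym : A.IsFormalAdjoint A)
    {u : ℂ} {R Rbar : H →L[ℂ] H} (hR : IsResolvent A u R)
    (hRbar : IsResolvent A (starRingEnd ℂ u) Rbar) (x ψ : H) :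
    ⟪x, Rbar ψ⟫_ℂ = ⟪R x, ψ⟫_ℂ := by
  have hx : -A ⟨R x, hR.mem x⟩ + u • R x = x := hR.left x
  have hψ : -A ⟨Rbar ψ, hRbar.mem ψ⟩ + (starRingEnd ℂ u) • Rbar ψ = ψ := hRbar.left ψ
  have hs : ⟪A ⟨R x, hR.mem x⟩, Rbar ψ⟫_ℂ = ⟪R x, A ⟨Rbar ψ, hRbar.mem ψ⟩⟫_ℂ :=
    hsym ⟨R x, hR.mem x⟩ ⟨Rbar ψ, hRbar.mem ψ⟩
  calc ⟪x, Rbar ψ⟫_ℂ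
      = ⟪-A ⟨R x, hR.mem x⟩ + u • R x, Rbar ψ⟫_ℂ := by rw [hx]
    _ = -⟪A ⟨R x, hR.mem x⟩, Rbar ψ⟫_ℂ + (starRingEnd ℂ u) * ⟪R x, Rbar ψ⟫_ℂ := by
        rw [inner_add_left, inner_neg_left, inner_smul_left]
    _ = -⟪R x, A ⟨Rbar ψ, hRbar.mem ψ⟩⟫_ℂ + (starRingEnd ℂ u) * ⟪R x, Rbar ψ⟫_ℂ := by
        rw [hs]
    _ = ⟪R x, -A ⟨Rbar ψ, hRbar.mem ψ⟩ + (starRingEnd ℂ u) • Rbar ψ⟫_ℂ := by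
        rw [inner_add_right, inner_neg_right, inner_smul_right]
    _ = ⟪R x, ψ⟫_ℂ := by rw [hψ]

/-- Norm bound for the resolvent at `iε` of a symmetric operator. -/
theorem resolvent_norm_bound {A : H →ₗ.[ℂ] H} (hsym : A.IsFormalAdjoint A)
    {e : ℝ} {R : H →L[ℂ] H} (hR : IsResolvent A (Complex.I * (e : ℂ)) R) (ψ : H) :
    |e| * ‖R ψ‖ ≤ ‖ψ‖ := by
  have hψ : -A ⟨R ψ, hR.mem ψ⟩ + (Complex.I * (e : ℂ)) • R ψ = ψ := hR.left ψ
  set g : A.domain := ⟨R ψ, hR.mem ψ⟩ with hg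
  have hs : ⟪A g, R ψ⟫_ℂ = ⟪R ψ, A g⟫_ℂ := hsym g g
  have him : (⟪A g, R ψ⟫_ℂ).im = 0 := by
    have h2 : (starRingEnd ℂ) ⟪A g, R ψ⟫_ℂ = ⟪R ψ, A g⟫_ℂ := inner_conj_symm _ _
    have h3 : (starRingEnd ℂ) ⟪A g, R ψ⟫_ℂ = ⟪A g, R ψ⟫_ℂ := by rw [h2, ← hs]
    exact (Complex.conj_eq_iff_im.mp h3)
  have hre : Complex.re ⟪-A g, (Complex.I * (e : ℂ)) • R ψ⟫_ℂ = 0 := by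
    rw [inner_smul_right, inner_neg_left]
    simp [Complex.mul_re, him]
  have hcn : ‖Complex.I * (e : ℂ)‖ = |e| := by
    simp
  have hnorm2 : ‖ψ‖ ^ 2 = ‖A g‖ ^ 2 + (|e| * ‖R ψ‖) ^ 2 := by
    calc ‖ψ‖ ^ 2 = ‖-A g + (Complex.I * (e : ℂ)) • R ψ‖ ^ 2 := by rw [hψ]
      _ = ‖-A g‖ ^ 2 + 2 * Complex.re ⟪-A g, (Complex.I * (e : ℂ)) • R ψ⟫_ℂ
          + ‖(Complex.I * (e : ℂ)) • R ψ‖ ^ 2 := by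
          have h := norm_add_sq (𝕜 := ℂ) (-(A g : H)) ((Complex.I * (e : ℂ)) • R ψ)
          rwa [RCLike.re_to_complex] at h
      _ = ‖A g‖ ^ 2 + (|e| * ‖R ψ‖) ^ 2 := by
          rw [hre, norm_neg, norm_smul, hcn]; ring
  have hsq : (|e| * ‖R ψ‖) ^ 2 ≤ ‖ψ‖ ^ 2 := by
    rw [hnorm2]; nlinarith [sq_nonneg ‖A g‖]
  nlinarith [mul_nonneg (abs_nonneg e) (norm_nonneg (R ψ)), norm_nonneg ψ]

/-- `G(z)ℓ − G(w)ℓ = (w − z) R(w) G(z)ℓ`. -/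
theorem G_sub {X : Type*} [NormedAddCommGroup X] [NormedSpace ℂ X]
    {A : H →ₗ.[ℂ] H} (hsym : A.IsFormalAdjoint A) (τ : A.domain →ₗ[ℂ] X)
    {z w : ℂ} {Rw Rzbar Rwbar : H →L[ℂ] H}
    (hRw : IsResolvent A w Rw)
    (hRzbar : IsResolvent A (starRingEnd ℂ z) Rzbar)
    (hRwbar : IsResolvent A (starRingEnd ℂ w) Rwbar)
    (Gz Gw : StrongDual ℂ X →SL[starRingEnd ℂ] H)
    (hGz : ∀ (ℓ : StrongDual ℂ X) (ψ : H),
      ⟪Gz ℓ, ψ⟫_ℂ = ℓ (τ ⟨Rzbar ψ, hRzbar.mem ψ⟩))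
    (hGw : ∀ (ℓ : StrongDual ℂ X) (ψ : H),
      ⟪Gw ℓ, ψ⟫_ℂ = ℓ (τ ⟨Rwbar ψ, hRwbar.mem ψ⟩))
    (ℓ : StrongDual ℂ X) :
    Gz ℓ - Gw ℓ = (w - z) • Rw (Gz ℓ) := by
  apply ext_inner_right ℂ
  intro ψ
  have hid : Rzbar ψ = Rwbar ψ + ((starRingEnd ℂ) w - (starRingEnd ℂ) z) • Rzbar (Rwbar ψ) :=
    resolvent_sub hRzbar hRwbar ψ
  have hsub : (⟨Rzbar ψ, hRzbar.mem ψ⟩ : A.domain)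
      = ⟨Rwbar ψ, hRwbar.mem ψ⟩
        + ((starRingEnd ℂ) w - (starRingEnd ℂ) z) • ⟨Rzbar (Rwbar ψ), hRzbar.mem (Rwbar ψ)⟩ := by
    apply Subtype.ext
    simpa using hid
  have he : ℓ (τ ⟨Rzbar (Rwbar ψ), hRzbar.mem (Rwbar ψ)⟩) = ⟪Gz ℓ, Rwbar ψ⟫_ℂ :=
    (hGz ℓ (Rwbar ψ)).symm
  rw [inner_sub_left, hGz, hGw, hsub, map_add, map_smul, map_add, map_smul, smul_eq_mul, he,
    resolvent_adjoint_s8 hsym hRw hRwbar (Gz ℓ) ψ, inner_smul_left, map_sub]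
  ring

/-- If `G(z)ℓ ∈ D(A)` then `ℓ = 0`. -/
theorem G_ker {X : Type*} [NormedAddCommGroup X] [NormedSpace ℂ X]
    {A : H →ₗ.[ℂ] H} (hsym : A.IsFormalAdjoint A) (τ : A.domain →ₗ[ℂ] X)
    (hτsurj : Function.Surjective τ)
    (hker : Dense ((fun φ : A.domain => (φ : H)) '' {φ : A.domain | τ φ = 0}))
    {z : ℂ} {Rz Rzbar : H →L[ℂ] H}
    (hRz : IsResolvent A z Rz) (hRzbar : IsResolvent A (starRingEnd ℂ z) Rzbar)
    (Gz : StrongDual ℂ X →SL[starRingEnd ℂ] H)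
    (hGz : ∀ (ℓ : StrongDual ℂ X) (ψ : H),
      ⟪Gz ℓ, ψ⟫_ℂ = ℓ (τ ⟨Rzbar ψ, hRzbar.mem ψ⟩))
    (ℓ : StrongDual ℂ X) (hu : Gz ℓ ∈ A.domain) : ℓ = 0 := by
  set u : A.domain := ⟨Gz ℓ, hu⟩ with hudef
  set v : H := -A u + z • (Gz ℓ) with hvdef
  have key : ∀ g : A.domain, ⟪v, (g : H)⟫_ℂ = ℓ (τ g) := by
    intro g
    have h1 : ⟪v, (g : H)⟫_ℂ = ⟪Gz ℓ, -A g + (starRingEnd ℂ) z • (g : H)⟫_ℂ := by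
      rw [hvdef, inner_add_left, inner_neg_left, inner_smul_left,
        inner_add_right, inner_neg_right, inner_smul_right]
      have hs : ⟪A u, (g : H)⟫_ℂ = ⟪Gz ℓ, A g⟫_ℂ := hsym u g
      rw [hs]
    have h2 : (⟨Rzbar (-A g + (starRingEnd ℂ) z • (g : H)),
        hRzbar.mem _⟩ : A.domain) = g := Subtype.ext (hRzbar.right g)
    rw [h1, hGz, h2]
  have hv0 : v = 0 := by
    have hfun : (fun x : H => ⟪v, x⟫_ℂ) = fun _ => (0 : ℂ) := by
      apply Continuous.ext_on hker
      · exact continuous_const.inner continuous_id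
      · exact continuous_const
      · rintro x ⟨g, hg, rfl⟩
        have hg' : τ g = 0 := hg
        show ⟪v, (g : H)⟫_ℂ = 0
        rw [key g, hg', map_zero]
    have := congrFun hfun v
    exact inner_self_eq_zero.mp this
  ext x
  obtain ⟨g, rfl⟩ := hτsurj x
  rw [← key g, hv0, inner_zero_left]
  rfl

end Aux

/-- Assume (h1) `τ` surjective, (h2) `Ker τ` dense in `H`, (h3)
`‖τφ‖ ≤ c ‖Aφ‖`.  If `φ ∈ H`, `z ∈ ρ(A)`, `ψ ∈ D̂(A)` and `Q ∈ X'` are such that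
`φ − G(z)Q ∈ D(A)` and `𝓘(φ − G(z)Q) = ψ + K(z)Q`, then the pair `(ψ, Q)` is unique and
independent of `z`.  Here `K(z)ℓ = z • Rhat (G(z)ℓ)`. -/
theorem decomposition_unique
    {H : Type*} [NormedAddCommGroup H] [InnerProductSpace ℂ H] [CompleteSpace H]
    {X : Type*} [NormedAddCommGroup X] [NormedSpace ℂ X] [CompleteSpace X]
    (A : H →ₗ.[ℂ] H) (hA : IsSelfAdjoint A)
    (hinj : ∀ φ : A.domain, A φ = 0 → (φ : H) = 0)
    (τ : A.domain →ₗ[ℂ] X)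
    -- (h1), (h2), (h3)
    (hτsurj : Function.Surjective τ)
    (hker : Dense ((fun φ : A.domain => (φ : H)) '' {φ : A.domain | τ φ = 0}))
    (hτbdd : ∃ c : ℝ, ∀ φ : A.domain, ‖τ φ‖ ≤ c * ‖A φ‖)
    -- the completion `D̂(A)` of `D(A)` w.r.t. the norm `‖φ‖_(A) = ‖Aφ‖`
    {Dhat : Type*} [NormedAddCommGroup Dhat] [NormedSpace ℂ Dhat] [CompleteSpace Dhat]
    (iota : A.domain →ₗ[ℂ] Dhat)
    (hiso : ∀ φ : A.domain, ‖iota φ‖ = ‖A φ‖)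
    (hdense : DenseRange iota)
    -- a sequence of nonzero reals converging to `0`, with the associated resolvents
    (ε : ℕ → ℝ) (hε0 : ∀ n, ε n ≠ 0) (hεlim : Filter.Tendsto ε Filter.atTop (nhds 0))
    (Rn : ℕ → H →L[ℂ] H) (hRn : ∀ n, IsResolvent A (Complex.I * (ε n : ℂ)) (Rn n))
    -- `Rhat φ = lim 𝓘 (R(iεₙ) φ)`
    (Rhat : H →L[ℂ] Dhat)
    (hRhat : ∀ φ : H, Filter.Tendsto (fun n => iota ⟨Rn n φ, (hRn n).mem φ⟩)
      Filter.atTop (nhds (Rhat φ)))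
    -- points `z, w ∈ ρ(A)` and the maps `G(z)`, `G(w)`
    (z w : ℂ) (Rz Rzbar Rw Rwbar : H →L[ℂ] H)
    (hRz : IsResolvent A z Rz) (hRzbar : IsResolvent A (starRingEnd ℂ z) Rzbar)
    (hRw : IsResolvent A w Rw) (hRwbar : IsResolvent A (starRingEnd ℂ w) Rwbar)
    (Gz Gw : StrongDual ℂ X →SL[starRingEnd ℂ] H)
    (hGz : ∀ (ℓ : StrongDual ℂ X) (ψ : H),
      ⟪Gz ℓ, ψ⟫_ℂ = ℓ (τ ⟨Rzbar ψ, hRzbar.mem ψ⟩))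
    (hGw : ∀ (ℓ : StrongDual ℂ X) (ψ : H),
      ⟪Gw ℓ, ψ⟫_ℂ = ℓ (τ ⟨Rwbar ψ, hRwbar.mem ψ⟩))
    -- two decompositions of the same `φ`, at `z` and at `w`
    (φ : H) (ψ ψ' : Dhat) (Q Q' : StrongDual ℂ X)
    (hmem : φ - Gz Q ∈ A.domain)
    (hdec : iota ⟨φ - Gz Q, hmem⟩ = ψ + z • Rhat (Gz Q))
    (hmem' : φ - Gw Q' ∈ A.domain)
    (hdec' : iota ⟨φ - Gw Q', hmem'⟩ = ψ' + w • Rhat (Gw Q')) :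
    ψ' = ψ ∧ Q' = Q := by
  -- `A` is symmetric
  have hsym : A.IsFormalAdjoint A := by
    have h := LinearPMap.adjoint_isFormalAdjoint (T := A) hA.dense_domain
    rwa [LinearPMap.isSelfAdjoint_def.mp hA] at h
  -- uniqueness of `Q`
  have hQ : Q' = Q := by
    have hdm : Gw Q' - Gz Q ∈ A.domain := by
      have h : (φ - Gz Q) - (φ - Gw Q') ∈ A.domain := sub_mem hmem hmem'
      rwa [sub_sub_sub_cancel_left] at h
    have h2 : Gw Q' - Gz Q' ∈ A.domain := by
      have hG := G_sub hsym τ hRw hRzbar hRwbar Gz Gw hGz hGw Q'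
      have hm : (w - z) • Rw (Gz Q') ∈ A.domain := A.domain.smul_mem _ (hRw.mem _)
      rw [← hG] at hm
      have hn := A.domain.neg_mem hm
      rwa [neg_sub] at hn
    have h3 : Gz Q' - Gz Q ∈ A.domain := by
      have h := sub_mem hdm h2
      rwa [sub_sub_sub_cancel_left] at h
    have h4 : Gz (Q' - Q) ∈ A.domain := by rw [map_sub]; exact h3
    have h5 := G_ker hsym τ hτsurj hker hRz hRzbar Gz hGz (Q' - Q) h4
    exact sub_eq_zero.mp h5
  subst hQ
  refine ⟨?_, rfl⟩
  -- the vector `v = G(w)Q' − G(z)Q' ∈ D(A)`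
  have hGdiff : Gz Q' - Gw Q' = (w - z) • Rw (Gz Q') :=
    G_sub hsym τ hRw hRzbar hRwbar Gz Gw hGz hGw Q'
  have h3 : (z - w) • Rw (Gz Q') = Gw Q' - Gz Q' := by
    rw [show Gw Q' - Gz Q' = -(Gz Q' - Gw Q') from (neg_sub _ _).symm, hGdiff,
      ← neg_smul, neg_sub]
  set vd : A.domain := (z - w) • (⟨Rw (Gz Q'), hRw.mem (Gz Q')⟩ : A.domain) with hvddef
  have hvcoe : (vd : H) = Gw Q' - Gz Q' := by
    calc (vd : H) = (z - w) • Rw (Gz Q') := rfl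
      _ = Gw Q' - Gz Q' := h3
  have hAvd : A vd = w • Gw Q' - z • Gz Q' := by
    rw [hvddef, LinearPMap.map_smul, IsResolvent.map_eq hRw (Gz Q')]
    calc (z - w) • (w • Rw (Gz Q') - Gz Q')
        = w • ((z - w) • Rw (Gz Q')) - (z - w) • Gz Q' := by
          rw [smul_sub, smul_comm]
      _ = w • (Gw Q' - Gz Q') - (z - w) • Gz Q' := by rw [h3]
      _ = w • Gw Q' - z • Gz Q' := by rw [smul_sub, sub_smul]; abel
  have hvd' : (⟨φ - Gz Q', hmem⟩ : A.domain) - ⟨φ - Gw Q', hmem'⟩ = vd := by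
    apply Subtype.ext
    show (φ - Gz Q') - (φ - Gw Q') = (vd : H)
    rw [hvcoe]; abel
  -- the approximating sequence
  set t : ℕ → A.domain := fun n =>
    z • (⟨Rn n (Gz Q'), (hRn n).mem _⟩ : A.domain)
      - w • ⟨Rn n (Gw Q'), (hRn n).mem _⟩ with htdef
  have hcn : ∀ n, ‖Complex.I * (ε n : ℂ)‖ = |ε n| := fun n => by simp
  have hlim1 : Tendsto (fun n => iota (t n)) atTop
      (𝓝 (z • Rhat (Gz Q') - w • Rhat (Gw Q'))) := by
    have h1 := (hRhat (Gz Q')).const_smul z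
    have h2 := (hRhat (Gw Q')).const_smul w
    exact (h1.sub h2).congr fun n => by simp only [htdef, map_sub, map_smul]
  have hb : ∀ n, ‖iota (t n) - iota vd‖ ≤ |ε n| * (2 * ‖(vd : H)‖) := by
    intro n
    have hrn : Rn n (z • Gz Q' - w • Gw Q') = z • Rn n (Gz Q') - w • Rn n (Gw Q') := by
      rw [map_sub, map_smul, map_smul]
    have hAt : A (t n - vd) = (Complex.I * (ε n : ℂ)) •
        (z • Rn n (Gz Q') - w • Rn n (Gw Q')) := by
      simp only [htdef]
      rw [LinearPMap.map_sub, LinearPMap.map_sub, LinearPMap.map_smul, LinearPMap.map_smul,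
        IsResolvent.map_eq (hRn n) (Gz Q'), IsResolvent.map_eq (hRn n) (Gw Q'), hAvd]
      module
    have hR0 : z • Rn n (Gz Q') - w • Rn n (Gw Q')
        = (vd : H) - (Complex.I * (ε n : ℂ)) • Rn n (vd : H) := by
      rw [← hrn]
      have h5 : (z • Gz Q' - w • Gw Q') + (Complex.I * (ε n : ℂ)) • (vd : H)
          = -A vd + (Complex.I * (ε n : ℂ)) • (vd : H) := by rw [hAvd]; abel
      have h6 := (hRn n).right vd
      rw [← h5, map_add, map_smul] at h6
      exact eq_sub_of_add_eq h6
    have hbd := resolvent_norm_bound hsym (hRn n) (vd : H)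
    calc ‖iota (t n) - iota vd‖ = ‖A (t n - vd)‖ := by rw [← map_sub, hiso]
      _ = ‖Complex.I * (ε n : ℂ)‖ * ‖z • Rn n (Gz Q') - w • Rn n (Gw Q')‖ := by
          rw [hAt, norm_smul]
      _ = |ε n| * ‖(vd : H) - (Complex.I * (ε n : ℂ)) • Rn n (vd : H)‖ := by
          rw [hR0, hcn n]
      _ ≤ |ε n| * (‖(vd : H)‖ + ‖(Complex.I * (ε n : ℂ)) • Rn n (vd : H)‖) :=
          mul_le_mul_of_nonneg_left (norm_sub_le _ _) (abs_nonneg _)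
      _ = |ε n| * (‖(vd : H)‖ + |ε n| * ‖Rn n (vd : H)‖) := by rw [norm_smul, hcn n]
      _ ≤ |ε n| * (‖(vd : H)‖ + ‖(vd : H)‖) :=
          mul_le_mul_of_nonneg_left (by linarith) (abs_nonneg _)
      _ = |ε n| * (2 * ‖(vd : H)‖) := by ring
  have hlim2 : Tendsto (fun n => iota (t n)) atTop (𝓝 (iota vd)) := by
    rw [tendsto_iff_norm_sub_tendsto_zero]
    have hz0 : Tendsto (fun n => |ε n| * (2 * ‖(vd : H)‖)) atTop (𝓝 0) := by
      have h := hεlim.abs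
      rw [abs_zero] at h
      simpa using h.mul_const (2 * ‖(vd : H)‖)
    exact squeeze_zero (fun n => norm_nonneg _) hb hz0
  have huniq : iota vd = z • Rhat (Gz Q') - w • Rhat (Gw Q') :=
    tendsto_nhds_unique hlim2 hlim1
  -- conclude
  have hψeq : ψ = iota ⟨φ - Gz Q', hmem⟩ - z • Rhat (Gz Q') := eq_sub_of_add_eq hdec.symm
  have hψ'eq : ψ' = iota ⟨φ - Gw Q', hmem'⟩ - w • Rhat (Gw Q') := eq_sub_of_add_eq hdec'.symm
  have hio : iota ⟨φ - Gz Q', hmem⟩ - iota ⟨φ - Gw Q', hmem'⟩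
      = z • Rhat (Gz Q') - w • Rhat (Gw Q') := by rw [← map_sub, hvd', huniq]
  rw [hψeq, hψ'eq, sub_eq_sub_iff_sub_eq_sub,
    ← neg_sub (iota ⟨φ - Gz Q', hmem⟩) (iota ⟨φ - Gw Q', hmem'⟩), hio, neg_sub]

end SingPert
end
end
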